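/- arXiv:1711.00461 — 3 statements merged into one kernel-verified Lean document; each statement's English description precedes it below -/
import Mathlib

section
/- Let K be the boundary complex of a hexagon: the simplicial complex on [6] whose faces are ∅, the six singletons, and the six edges {1,2},{2,3},{3,4},{4,5},{5,6},{6,1} (so its minimal non-faces are {1,3},{1,4},{1,5},{2,4},{2,5},{2,6},{3,5},{3,6},{4,6}). For j = 1,2,3 let α_j ∈ H^3(R(K),d) be the class of the cocycle v_j u_{j+3}. Then the triple Massey product ⟨α_1,α_2,α_3⟩ ⊆ H^8(R(K),d) is defined, it contains the zero class, and it also contains a nonzero class; in particular it is defined but not strictly defined. -/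
namespace MasseyPaper

/-- An abstract simplicial complex on the vertex type `V` (no ghost vertices). -/
structure SComplex (V : Type) [DecidableEq V] : Type where
  faces : Set (Finset V)
  empty_mem : ∅ ∈ faces
  down_closed : ∀ ⦃σ τ : Finset V⦄, σ ∈ faces → τ ⊆ σ → τ ∈ faces
  singleton_mem : ∀ v : V, ({v} : Finset V) ∈ faces

variable {V : Type} [DecidableEq V]

/-- `I` is a minimal non-face of `K`. -/
def IsMNF (K : SComplex V) (I : Finset V) : Prop :=
  I ∉ K.faces ∧ ∀ J : Finset V, J ⊂ I → J ∈ K.faces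

/-- The free `ℚ`-algebra on generators `u_i` (`Sum.inl i`) and `v_i` (`Sum.inr i`). -/
abbrev FA (V : Type) : Type := FreeAlgebra ℚ (V ⊕ V)

def uF (i : V) : FA V := FreeAlgebra.ι ℚ (Sum.inl i)
def vF (i : V) : FA V := FreeAlgebra.ι ℚ (Sum.inr i)

/-- The relations defining the Koszul cochain algebra `R(K)`:
graded commutativity of the generators, `v_i² = u_i v_i = 0` and
the squarefree monomials corresponding to minimal non-faces of `K`. -/
inductive RKRel (K : SComplex V) : FA V → FA V → Prop
  | ucomm (i j : V) : RKRel K (uF i * uF j) (-(uF j * uF i))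
  | vcomm (i j : V) : RKRel K (vF i * vF j) (vF j * vF i)
  | uvcomm (i j : V) : RKRel K (uF i * vF j) (vF j * uF i)
  | vsq (i : V) : RKRel K (vF i * vF i) 0
  | uv (i : V) : RKRel K (uF i * vF i) 0
  | mnf (l : List V) : l.Nodup → IsMNF K l.toFinset → RKRel K ((l.map vF).prod) 0

/-- The Koszul cochain algebra `R(K)` over `ℚ`. -/
abbrev RK (K : SComplex V) : Type := RingQuot (RKRel K)

def mkRK (K : SComplex V) : FA V →ₐ[ℚ] RK K := RingQuot.mkAlgHom ℚ (RKRel K)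

/-- The exterior generator `u_i ∈ R(K)`, of degree 1. -/
def uK (K : SComplex V) (i : V) : RK K := mkRK K (uF i)

/-- The polynomial generator `v_i ∈ R(K)`, of degree 2. -/
def vK (K : SComplex V) (i : V) : RK K := mkRK K (vF i)

def genDeg (g : V ⊕ V) : ℕ := Sum.elim (fun _ => 1) (fun _ => 2) g
def genIdx (g : V ⊕ V) : V := Sum.elim id id g

def listMon (K : SComplex V) (l : List (V ⊕ V)) : RK K :=
  (l.map fun g => mkRK K (FreeAlgebra.ι ℚ g)).prod

/-- The homogeneous component of total degree `n` of `R(K)`. -/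
def gradePiece (K : SComplex V) (n : ℕ) : Submodule ℚ (RK K) :=
  Submodule.span ℚ {x | ∃ l : List (V ⊕ V), (l.map genDeg).sum = n ∧ x = listMon K l}

/-- The homogeneous component of total degree `n` and multidegree `J` of `R(K)`. -/
def mGradePiece (K : SComplex V) (n : ℕ) (J : V → ℕ) : Submodule ℚ (RK K) :=
  Submodule.span ℚ {x | ∃ l : List (V ⊕ V), (l.map genDeg).sum = n ∧
    (∀ w : V, (l.map genIdx).count w = J w) ∧ x = listMon K l}

/-- Homogeneity predicate for the total grading of `R(K)`. -/
def totalHomog (K : SComplex V) (n : ℕ) (x : RK K) : Prop := x ∈ gradePiece K n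

/-- `d` is the Koszul differential of `R(K)`: the (unique) graded derivation with
`d u_i = v_i`, `d v_i = 0`; it preserves the multigrading and raises total degree by one. -/
def IsKoszulDiff (K : SComplex V) (d : RK K →ₗ[ℚ] RK K) : Prop :=
  (∀ i : V, d (uK K i) = vK K i) ∧
  (∀ i : V, d (vK K i) = 0) ∧
  (∀ n : ℕ, ∀ a ∈ gradePiece K n, ∀ b : RK K,
      d (a * b) = d a * b + ((-1 : ℚ) ^ n) • (a * d b)) ∧
  (∀ (n : ℕ) (J : V → ℕ), ∀ a ∈ mGradePiece K n J, d a ∈ mGradePiece K (n + 1) J)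

/-- The degree of the entry `c i j` of a defining system for classes of degrees `n 1, …, n k`:
`n i + n (i+1) + ⋯ + n (j-1) − (j − i) + 1`. -/
def sysDeg (n : ℕ → ℕ) (i j : ℕ) : ℕ := (∑ q ∈ Finset.Ico i j, n q) - (j - i) + 1

/-- A defining system for the `k`-fold Massey product of the classes of the cocycles
`a 1, …, a k`, of degrees `n 1, …, n k`, in a cochain DGA with differential `d` and
homogeneity predicate `homog`. -/
structure DefSys {A : Type} [Ring A] [Module ℚ A] (d : A → A) (homog : ℕ → A → Prop)
    (k : ℕ) (n : ℕ → ℕ) (a : ℕ → A) : Type where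
  c : ℕ → ℕ → A
  homog_c : ∀ i j : ℕ, 1 ≤ i → i < j → j ≤ k + 1 → (i, j) ≠ (1, k + 1) →
    homog (sysDeg n i j) (c i j)
  c_diag : ∀ i : ℕ, 1 ≤ i → i ≤ k → c i (i + 1) = a i
  d_c : ∀ i j : ℕ, 1 ≤ i → i < j → j ≤ k + 1 → (i, j) ≠ (1, k + 1) →
    d (c i j) = ∑ p ∈ Finset.Ioo i j, ((-1 : ℚ) ^ sysDeg n i p) • (c i p * c p j)

/-- The cocycle `a(C)` associated to a defining system `C`. -/
def DefSys.val {A : Type} [Ring A] [Module ℚ A] {d : A → A} {homog : ℕ → A → Prop}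
    {k : ℕ} {n : ℕ → ℕ} {a : ℕ → A} (C : DefSys d homog k n a) : A :=
  -∑ p ∈ Finset.Ioo 1 (k + 1), ((-1 : ℚ) ^ sysDeg n 1 p) • (C.c 1 p * C.c p (k + 1))

/-- The `k`-fold Massey product `⟨[a 1], …, [a k]⟩` is defined. -/
def MasseyDefined {A : Type} [Ring A] [Module ℚ A] (d : A → A) (homog : ℕ → A → Prop)
    (k : ℕ) (n : ℕ → ℕ) (a : ℕ → A) : Prop :=
  Nonempty (DefSys d homog k n a)

/-- The `k`-fold Massey product `⟨[a 1], …, [a k]⟩` is strictly defined: the values of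
any two defining systems are cohomologous, i.e. it consists of a single cohomology class. -/
def MasseyStrict {A : Type} [Ring A] [Module ℚ A] (d : A → A) (homog : ℕ → A → Prop)
    (k : ℕ) (n : ℕ → ℕ) (a : ℕ → A) : Prop :=
  ∀ C C' : DefSys d homog k n a, ∃ z : A, C.val - C'.val = d z

/-- The `k`-fold Massey product `⟨[a 1], …, [a k]⟩` is nontrivial: it does not
contain the zero cohomology class. -/
def MasseyNontrivial {A : Type} [Ring A] [Module ℚ A] (d : A → A) (homog : ℕ → A → Prop)
    (k : ℕ) (n : ℕ → ℕ) (a : ℕ → A) : Prop :=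
  ∀ C : DefSys d homog k n a, ¬ ∃ z : A, C.val = d z



/-- The boundary complex of a hexagon: the simplicial complex on `[6]` (0-indexed)
whose faces are `∅`, the six vertices, and the six edges `{i, i+1}` (mod 6). -/
def hexagon : SComplex (Fin 6) where
  faces := {σ | ∃ i : Fin 6, σ ⊆ {i, i + 1}}
  empty_mem := ⟨0, by simp⟩
  down_closed := by
    intro σ τ hσ hsub
    obtain ⟨i, hi⟩ := hσ
    exact ⟨i, hsub.trans hi⟩
  singleton_mem := by
    intro v
    exact ⟨v, by simp⟩

/-- The cocycle `v_j u_{j+3} ∈ R(K)` for the hexagon (`1 ≤ j ≤ 3`, written 0-indexed),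
representing `α_j ∈ H^3(R(K), d)`. -/
def hexClass (j : ℕ) : RK hexagon :=
  open Fin.NatCast in
  vK hexagon ((j - 1 : ℕ) : Fin 6) * uK hexagon ((j + 2 : ℕ) : Fin 6)


/-! ### Auxiliary development -/

section Aux

open Sum

abbrev G6 := Fin 6 ⊕ Fin 6

def uIdx (l : List G6) : List (Fin 6) := l.filterMap Sum.getLeft?
def vIdx (l : List G6) : List (Fin 6) := l.filterMap Sum.getRight?

def inv6 : List (Fin 6) → ℕ
  | [] => 0
  | a :: t => t.countP (fun y => decide (y < a)) + inv6 t

def coefE (s : Multiset (Fin 6)) : ℤ :=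
  if s = {0,1} then 1 else if s = {1,2} then 1 else if s = {2,3} then 1
  else if s = {3,4} then 1 else if s = {4,5} then 1 else if s = {0,5} then -1 else 0

def fullM : Multiset (Fin 6) := {0,1,2,3,4,5}

def phif (l : List G6) : ℚ :=
  (if (↑(l.map genIdx) : Multiset (Fin 6)) = fullM then 1 else 0) *
    (coefE (↑(vIdx l)) : ℚ) * (-1 : ℚ) ^ inv6 (uIdx l)

lemma neg_one_pow_eq_neg_of_add_odd {a b K : ℕ} (h : a + b = 2 * K + 1) :
    (-1 : ℚ) ^ a = -(-1 : ℚ) ^ b := by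
  have hb : (-1 : ℚ) ^ b * (-1 : ℚ) ^ b = 1 := by
    rw [← pow_add]; exact Even.neg_one_pow ⟨b, rfl⟩
  have hab : (-1 : ℚ) ^ (a + b) = -1 := Odd.neg_one_pow ⟨K, by omega⟩
  calc (-1 : ℚ) ^ a = (-1 : ℚ) ^ a * ((-1 : ℚ) ^ b * (-1 : ℚ) ^ b) := by rw [hb, mul_one]
    _ = (-1 : ℚ) ^ (a + b) * (-1 : ℚ) ^ b := by rw [pow_add]; ring
    _ = -(-1 : ℚ) ^ b := by rw [hab]; ring

lemma neg_one_pow_eq_of_add_even {a b K : ℕ} (h : a = 2 * K + b) :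
    (-1 : ℚ) ^ a = (-1 : ℚ) ^ b := by
  subst h; rw [pow_add, pow_mul]; norm_num

lemma inv6_insert (x : Fin 6) : ∀ (q₁ q₂ : List (Fin 6)),
    inv6 (q₁ ++ x :: q₂) = inv6 (q₁ ++ q₂) + q₁.countP (fun y => decide (x < y))
      + q₂.countP (fun y => decide (y < x))
  | [], q₂ => by simp [inv6]; ring
  | a :: q₁, q₂ => by
    have ih := inv6_insert x q₁ q₂
    have e1 : inv6 (a :: (q₁ ++ x :: q₂)) = (q₁ ++ x :: q₂).countP (fun y => decide (y < a))
        + inv6 (q₁ ++ x :: q₂) := rfl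
    have e2 : inv6 (a :: (q₁ ++ q₂)) = (q₁ ++ q₂).countP (fun y => decide (y < a))
        + inv6 (q₁ ++ q₂) := rfl
    simp only [List.cons_append, e1, e2, List.countP_append, List.countP_cons, ih]
    by_cases hxa : x < a <;> by_cases hax : a < x <;> simp [hxa, hax] <;> omega

lemma countP_ne_split (x : Fin 6) (q : List (Fin 6)) (h : ∀ y ∈ q, y ≠ x) :
    q.countP (fun y => decide (y < x)) + q.countP (fun y => decide (x < y)) = q.length := by
  induction q with
  | nil => simp
  | cons a t ih =>
    have ha : a ≠ x := h a (by simp)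
    have ht := ih (fun y hy => h y (by simp [hy]))
    rcases lt_or_gt_of_ne ha with h1 | h1 <;>
      · simp only [List.countP_cons, List.length_cons]
        simp [h1, h1.not_gt]
        omega

lemma inv6_swap_sign {i j : Fin 6} (hij : i ≠ j) (r s : List (Fin 6)) :
    (-1 : ℚ) ^ inv6 (r ++ i :: j :: s) = -(-1 : ℚ) ^ inv6 (r ++ j :: i :: s) := by
  have h1 := inv6_insert i r (j :: s)
  have h2 := inv6_insert j r (i :: s)
  have h5 := inv6_insert j r s
  have h6 := inv6_insert i r s
  have h3 : (j :: s).countP (fun y => decide (y < i))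
      = s.countP (fun y => decide (y < i)) + (if j < i then 1 else 0) := by
    rw [List.countP_cons]; by_cases h : j < i <;> simp [h]
  have h4 : (i :: s).countP (fun y => decide (y < j))
      = s.countP (fun y => decide (y < j)) + (if i < j then 1 else 0) := by
    rw [List.countP_cons]; by_cases h : i < j <;> simp [h]
  refine neg_one_pow_eq_neg_of_add_odd
    (K := inv6 (r ++ s) + r.countP (fun y => decide (i < y)) + r.countP (fun y => decide (j < y))
        + s.countP (fun y => decide (y < i)) + s.countP (fun y => decide (y < j))) ?_
  rw [h1, h2, h3, h4, h5, h6]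
  rcases lt_or_gt_of_ne hij with h | h <;> simp [h, h.not_gt] <;> omega

def Ffun (vm um : Multiset (Fin 6)) : ℤ :=
  ∑ x : Fin 6, (um.count x : ℤ) * coefE (x ::ₘ vm) *
    (-1 : ℤ) ^ (um.countP (fun y => decide (y < x)))

set_option maxRecDepth 10000 in
lemma Fzero : ∀ vm ∈ fullM.powerset, Ffun vm (fullM - vm) = 0 := by decide

end Aux


section Words

open Sum

/-- The word monomial in the free algebra. -/
noncomputable def wd (l : List G6) : FA (Fin 6) :=
  (l.map (FreeAlgebra.ι ℚ)).prod

lemma wd_nil : wd [] = 1 := rfl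

lemma wd_cons (g : G6) (l : List G6) : wd (g :: l) = FreeAlgebra.ι ℚ g * wd l := by
  simp [wd]

lemma wd_append (l₁ l₂ : List G6) : wd (l₁ ++ l₂) = wd l₁ * wd l₂ := by
  simp [wd]

lemma span_words_mul {x y : FA (Fin 6)}
    (hx : x ∈ Submodule.span ℚ (Set.range wd)) (hy : y ∈ Submodule.span ℚ (Set.range wd)) :
    x * y ∈ Submodule.span ℚ (Set.range wd) := by
  refine Submodule.span_induction₂
    (p := fun x y _ _ => x * y ∈ Submodule.span ℚ (Set.range wd)) ?_ ?_ ?_ ?_ ?_ ?_ ?_ hx hy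
  · rintro x y ⟨l, rfl⟩ ⟨l', rfl⟩
    exact Submodule.subset_span ⟨l ++ l', wd_append l l'⟩
  · intro y _; simp
  · intro x _; simp
  · intro x y z _ _ _ h1 h2; rw [add_mul]; exact Submodule.add_mem _ h1 h2
  · intro x y z _ _ _ h1 h2; rw [mul_add]; exact Submodule.add_mem _ h1 h2
  · intro r x y _ _ h; rw [smul_mul_assoc]; exact Submodule.smul_mem _ _ h
  · intro r x y _ _ h; rw [mul_smul_comm]; exact Submodule.smul_mem _ _ h

lemma span_words_top : Submodule.span ℚ (Set.range wd) = ⊤ := by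
  rw [eq_top_iff]
  rintro x -
  induction x using FreeAlgebra.induction with
  | grade0 r =>
    rw [Algebra.algebraMap_eq_smul_one]
    exact Submodule.smul_mem _ _ (Submodule.subset_span ⟨[], rfl⟩)
  | grade1 g =>
    refine Submodule.subset_span ⟨[g], ?_⟩
    simp [wd]
  | mul a b ha hb => exact span_words_mul ha hb
  | add a b ha hb => exact Submodule.add_mem _ ha hb

/-- The linear functional on the free algebra given by `phif` on words. -/
noncomputable def phiT : FA (Fin 6) →ₗ[ℚ] ℚ :=
  (Finsupp.linearCombination ℚ (fun w : FreeMonoid G6 => phif w)).comp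
    ((MonoidAlgebra.coeffLinearEquiv ℚ).toLinearMap.comp
      (FreeAlgebra.equivMonoidAlgebraFreeMonoid (R := ℚ) (X := G6)).toLinearMap)

lemma equiv_wd (l : List G6) :
    FreeAlgebra.equivMonoidAlgebraFreeMonoid (R := ℚ) (X := G6) (wd l)
      = MonoidAlgebra.single (FreeMonoid.ofList l) 1 := by
  induction l with
  | nil =>
    rw [wd_nil, map_one]
    rfl
  | cons g l ih =>
    rw [wd_cons, map_mul, ih]
    have hg : FreeAlgebra.equivMonoidAlgebraFreeMonoid (R := ℚ) (X := G6) (FreeAlgebra.ι ℚ g)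
        = MonoidAlgebra.single (FreeMonoid.of g) 1 := by
      simp [FreeAlgebra.equivMonoidAlgebraFreeMonoid]
    rw [hg, MonoidAlgebra.single_mul_single, one_mul]
    rfl

lemma phiT_wd (l : List G6) : phiT (wd l) = phif l := by
  rw [phiT, LinearMap.comp_apply, LinearMap.comp_apply]
  erw [equiv_wd]
  rw [LinearEquiv.coe_toLinearMap, MonoidAlgebra.coeffLinearEquiv_apply,
    MonoidAlgebra.coeff_single, Finsupp.linearCombination_single, one_smul]
  rfl

end Words

section Invariance

open Sum

@[simp] lemma uIdx_append (l₁ l₂ : List G6) : uIdx (l₁ ++ l₂) = uIdx l₁ ++ uIdx l₂ :=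
  List.filterMap_append
@[simp] lemma vIdx_append (l₁ l₂ : List G6) : vIdx (l₁ ++ l₂) = vIdx l₁ ++ vIdx l₂ :=
  List.filterMap_append
@[simp] lemma uIdx_cons_inl (i : Fin 6) (l : List G6) : uIdx (inl i :: l) = i :: uIdx l := by
  simp [uIdx]
@[simp] lemma uIdx_cons_inr (i : Fin 6) (l : List G6) : uIdx (inr i :: l) = uIdx l := by
  rfl
@[simp] lemma vIdx_cons_inl (i : Fin 6) (l : List G6) : vIdx (inl i :: l) = vIdx l := by
  rfl
@[simp] lemma vIdx_cons_inr (i : Fin 6) (l : List G6) : vIdx (inr i :: l) = i :: vIdx l := by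
  simp [vIdx]
@[simp] lemma uIdx_nil : uIdx [] = [] := rfl
@[simp] lemma vIdx_nil : vIdx [] = [] := rfl
@[simp] lemma genIdx_inl (i : Fin 6) : genIdx (inl i : G6) = i := rfl
@[simp] lemma genIdx_inr (i : Fin 6) : genIdx (inr i : G6) = i := rfl

lemma fullM_nodup : fullM.Nodup := by decide

lemma ind_dup_zero {L : List (Fin 6)} (h : ¬ L.Nodup) :
    (if (↑L : Multiset (Fin 6)) = fullM then (1 : ℚ) else 0) = 0 := by
  rw [if_neg]
  intro hf
  have : (↑L : Multiset (Fin 6)).Nodup := by rw [hf]; exact fullM_nodup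
  exact h (by simpa using this)

lemma phif_eq_zero_dup (p q : List G6) (g g' : G6) (h : genIdx g = genIdx g') :
    phif (p ++ g :: g' :: q) = 0 := by
  rw [phif, ind_dup_zero, zero_mul, zero_mul]
  intro hnd
  simp only [List.map_append, List.map_cons] at hnd
  rcases List.nodup_append.mp hnd with ⟨-, h2, -⟩
  rw [h] at h2
  simp at h2

lemma perm_coe_swap (p q : List G6) (g g' : G6) :
    ((((p ++ g :: g' :: q).map genIdx) : List (Fin 6)) : Multiset (Fin 6))
      = (((p ++ g' :: g :: q).map genIdx : List (Fin 6)) : Multiset (Fin 6)) := by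
  rw [Multiset.coe_eq_coe]
  simp only [List.map_append, List.map_cons]
  exact List.Perm.append_left _ (List.Perm.swap _ _ _)

lemma phif_uu (p q : List G6) (i j : Fin 6) :
    phif (p ++ inl i :: inl j :: q) = -phif (p ++ inl j :: inl i :: q) := by
  by_cases hij : i = j
  · subst hij
    rw [phif_eq_zero_dup p q _ _ rfl]
    norm_num
  · rw [phif, phif, perm_coe_swap]
    simp only [uIdx_append, uIdx_cons_inl, vIdx_append, vIdx_cons_inl]
    rw [inv6_swap_sign hij]
    ring

lemma phif_vv (p q : List G6) (i j : Fin 6) :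
    phif (p ++ inr i :: inr j :: q) = phif (p ++ inr j :: inr i :: q) := by
  rw [phif, phif, perm_coe_swap]
  simp only [uIdx_append, uIdx_cons_inr, vIdx_append, vIdx_cons_inr]
  have : ((vIdx p ++ i :: j :: vIdx q : List (Fin 6)) : Multiset (Fin 6))
      = ((vIdx p ++ j :: i :: vIdx q : List (Fin 6)) : Multiset (Fin 6)) := by
    rw [Multiset.coe_eq_coe]
    exact List.Perm.append_left _ (List.Perm.swap _ _ _)
  rw [this]

lemma phif_uv (p q : List G6) (i j : Fin 6) :
    phif (p ++ inl i :: inr j :: q) = phif (p ++ inr j :: inl i :: q) := by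
  rw [phif, phif, perm_coe_swap]
  simp only [uIdx_append, uIdx_cons_inl, uIdx_cons_inr, vIdx_append, vIdx_cons_inl,
    vIdx_cons_inr]

lemma coef_edge {s : Multiset (Fin 6)} (h : coefE s ≠ 0) :
    ∃ j : Fin 6, ∀ a : Fin 6, a ∈ s → a ∈ ({j, j + 1} : Finset (Fin 6)) := by
  rw [coefE] at h
  split_ifs at h with h1 h2 h3 h4 h5 h6
  · exact ⟨0, by rw [h1]; intro a ha; fin_cases ha <;> decide⟩
  · exact ⟨1, by rw [h2]; intro a ha; fin_cases ha <;> decide⟩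
  · exact ⟨2, by rw [h3]; intro a ha; fin_cases ha <;> decide⟩
  · exact ⟨3, by rw [h4]; intro a ha; fin_cases ha <;> decide⟩
  · exact ⟨4, by rw [h5]; intro a ha; fin_cases ha <;> decide⟩
  · exact ⟨5, by rw [h6]; intro a ha; fin_cases ha <;> decide⟩
  · exact absurd rfl h

lemma edge_face (j : Fin 6) : ({j, j + 1} : Finset (Fin 6)) ∈ hexagon.faces :=
  ⟨j, subset_rfl⟩

lemma vIdx_map_inr (l : List (Fin 6)) : vIdx (l.map inr) = l := by
  induction l with
  | nil => rfl
  | cons a l ih => simp [ih]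

lemma phif_mnf (p q : List G6) (l : List (Fin 6)) (hml : IsMNF hexagon l.toFinset) :
    phif (p ++ l.map inr ++ q) = 0 := by
  rw [phif]
  have hc : coefE (↑(vIdx (p ++ l.map inr ++ q))) = 0 := by
    by_contra hc
    obtain ⟨j, hj⟩ := coef_edge hc
    refine hml.1 (hexagon.down_closed (edge_face j) ?_)
    intro a ha
    rw [List.mem_toFinset] at ha
    refine hj a ?_
    rw [Multiset.mem_coe]
    simp [vIdx_map_inr, ha]
  rw [hc]
  push_cast
  ring

end Invariance

section Sound

open Sum

lemma phiT_ext {f g : FA (Fin 6) →ₗ[ℚ] ℚ} (h : ∀ l : List G6, f (wd l) = g (wd l)) : f = g :=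
  LinearMap.ext_on span_words_top (by rintro x ⟨l, rfl⟩; exact h l)

lemma ctx_lift {a b : FA (Fin 6)}
    (h : ∀ p q : List G6, phiT (wd p * a * wd q) = phiT (wd p * b * wd q)) :
    ∀ x y : FA (Fin 6), phiT (x * a * y) = phiT (x * b * y) := by
  have h1 : ∀ (p : List G6) (y : FA (Fin 6)), phiT (wd p * a * y) = phiT (wd p * b * y) := by
    intro p y
    have := congrFun (congrArg (fun f : FA (Fin 6) →ₗ[ℚ] ℚ => ⇑f)
      (phiT_ext (f := phiT ∘ₗ LinearMap.mulLeft ℚ (wd p * a))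
        (g := phiT ∘ₗ LinearMap.mulLeft ℚ (wd p * b)) (fun q => by
          simpa [LinearMap.mulLeft_apply, mul_assoc] using h p q))) y
    simpa [LinearMap.mulLeft_apply, mul_assoc] using this
  intro x y
  have h2 := congrFun (congrArg (fun f : FA (Fin 6) →ₗ[ℚ] ℚ => ⇑f)
    (phiT_ext (f := phiT ∘ₗ LinearMap.mulRight ℚ (a * y))
      (g := phiT ∘ₗ LinearMap.mulRight ℚ (b * y)) (fun p => by
        simpa [LinearMap.mulRight_apply, mul_assoc] using h1 p y))) x
  simpa [LinearMap.mulRight_apply, mul_assoc] using h2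

lemma uF_mul_uF (i j : Fin 6) : uF i * uF j = wd [inl i, inl j] := by
  simp [wd, uF]
lemma vF_mul_vF (i j : Fin 6) : vF i * vF j = wd [inr i, inr j] := by
  simp [wd, vF]
lemma uF_mul_vF (i j : Fin 6) : uF i * vF j = wd [inl i, inr j] := by
  simp [wd, uF, vF]
lemma vF_mul_uF (i j : Fin 6) : vF i * uF j = wd [inr i, inl j] := by
  simp [wd, uF, vF]
lemma mnf_wd (l : List (Fin 6)) : (l.map vF).prod = wd (l.map inr) := by
  rw [wd, List.map_map]; rfl

lemma phiT_mid (p q m : List G6) : phiT (wd p * wd m * wd q) = phif (p ++ m ++ q) := by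
  rw [← wd_append, ← wd_append, phiT_wd]

lemma list_mid (p q : List G6) (g g' : G6) : p ++ [g, g'] ++ q = p ++ g :: g' :: q := by
  simp

lemma rel_ctx {a b : FA (Fin 6)} (h : RingQuot.Rel (RKRel hexagon) a b) :
    ∀ x y : FA (Fin 6), phiT (x * a * y) = phiT (x * b * y) := by
  induction h with
  | of hr =>
    cases hr with
    | ucomm i j =>
      apply ctx_lift; intro p q
      rw [uF_mul_uF, mul_neg, neg_mul, map_neg, uF_mul_uF, phiT_mid, phiT_mid,
        list_mid, list_mid, phif_uu]
    | vcomm i j =>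
      apply ctx_lift; intro p q
      rw [vF_mul_vF, vF_mul_vF, phiT_mid, phiT_mid, list_mid, list_mid, phif_vv]
    | uvcomm i j =>
      apply ctx_lift; intro p q
      rw [uF_mul_vF, vF_mul_uF, phiT_mid, phiT_mid, list_mid, list_mid, phif_uv]
    | vsq i =>
      apply ctx_lift; intro p q
      rw [vF_mul_vF, phiT_mid, list_mid, mul_zero, zero_mul, map_zero]
      exact phif_eq_zero_dup p q _ _ rfl
    | uv i =>
      apply ctx_lift; intro p q
      rw [uF_mul_vF, phiT_mid, list_mid, mul_zero, zero_mul, map_zero]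
      exact phif_eq_zero_dup p q _ _ rfl
    | mnf l hnd hmnf =>
      apply ctx_lift; intro p q
      rw [mnf_wd, phiT_mid, mul_zero, zero_mul, map_zero]
      exact phif_mnf p q l hmnf
  | @add_left a b c h ih =>
    intro x y
    rw [mul_add, add_mul, mul_add, add_mul, map_add, map_add, ih x y]
  | @mul_left a b c h ih =>
    intro x y
    have h3 := ih x (c * y)
    simp only [← mul_assoc] at h3 ⊢
    exact h3
  | @mul_right a b c h ih =>
    intro x y
    have h3 := ih (x * a) y
    simp only [← mul_assoc] at h3 ⊢
    exact h3

lemma phiT_mk_eq {x y : FA (Fin 6)} (h : mkRK hexagon x = mkRK hexagon y) :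
    phiT x = phiT y := by
  have sound : ∀ a b, RingQuot.Rel (RKRel hexagon) a b → phiT a = phiT b := fun a b hab => by
    simpa using rel_ctx hab 1 1
  have hq : (⟨Quot.mk _ x⟩ : RingQuot (RKRel hexagon)) = ⟨Quot.mk _ y⟩ := by
    have h2 : RingQuot.mkRingHom (RKRel hexagon) x = RingQuot.mkRingHom (RKRel hexagon) y := by
      rw [← RingQuot.mkAlgHom_coe ℚ (RKRel hexagon)]
      exact h
    rw [RingQuot.mkRingHom_def] at h2
    simpa using h2
  exact congrArg (Quot.lift (⇑phiT) sound) (congrArg RingQuot.toQuot hq)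

end Sound


section RKComp

open Sum

instance : DecidablePred (· ∈ hexagon.faces) := fun σ =>
  decidable_of_iff (∃ i : Fin 6, σ ⊆ {i, i + 1}) Iff.rfl

instance (I : Finset (Fin 6)) : Decidable (IsMNF hexagon I) := by
  unfold IsMNF; infer_instance

lemma uu_swap (i j : Fin 6) : uK hexagon i * uK hexagon j = -(uK hexagon j * uK hexagon i) := by
  have := RingQuot.mkAlgHom_rel ℚ (RKRel.ucomm (K := hexagon) i j)
  simpa [uK, mkRK, map_mul] using this

-- Local restatements of `Neg`-lemmas for `RK hexagon` (instance-diamond workaround).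
lemma RKneg_mul (a b : RK hexagon) : -a * b = -(a * b) := neg_mul a b
lemma RKmul_neg (a b : RK hexagon) : a * -b = -(a * b) := mul_neg a b
lemma RKneg_neg (a : RK hexagon) : - -a = a := neg_neg a
lemma RKneg_zero : -(0 : RK hexagon) = 0 := neg_zero
lemma RKneg_add (a b : RK hexagon) : -(a + b) = -a + -b := neg_add a b
lemma RKneg_one_smul (x : RK hexagon) : (-1 : ℚ) • x = -x := neg_one_smul ℚ x
lemma RKmul_negb (a b c : RK hexagon) (h : a * b = c) : a * -b = -c := by
  rw [RKmul_neg, h]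
lemma RKsub_eq (a b : RK hexagon) : a - b = a + -b := sub_eq_add_neg a b
lemma RKneg_inj {a b : RK hexagon} (h : a = b) : -a = -b := congrArg Neg.neg h
lemma d_neg (d : RK hexagon →ₗ[ℚ] RK hexagon) (x : RK hexagon) : d (-x) = -(d x) :=
  map_neg d x
lemma mkRK_sub (a b : FA (Fin 6)) :
    mkRK hexagon (a - b) = mkRK hexagon a + -(mkRK hexagon b) := by
  rw [map_sub]; exact sub_eq_add_neg _ _

lemma vv_swap (i j : Fin 6) : vK hexagon i * vK hexagon j = vK hexagon j * vK hexagon i := by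
  have := RingQuot.mkAlgHom_rel ℚ (RKRel.vcomm (K := hexagon) i j)
  simpa [vK, mkRK, map_mul] using this

lemma uv_swap (i j : Fin 6) : uK hexagon i * vK hexagon j = vK hexagon j * uK hexagon i := by
  have := RingQuot.mkAlgHom_rel ℚ (RKRel.uvcomm (K := hexagon) i j)
  simpa [uK, vK, mkRK, map_mul] using this

lemma vv_zero (i j : Fin 6) (h1 : ([i, j] : List (Fin 6)).Nodup)
    (h2 : IsMNF hexagon ([i, j] : List (Fin 6)).toFinset) :
    vK hexagon i * vK hexagon j = 0 := by
  have := RingQuot.mkAlgHom_rel ℚ (RKRel.mnf (K := hexagon) [i, j] h1 h2)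
  simpa [vK, mkRK, map_mul] using this

-- right-assoc helpers
lemma uvb_swap (i j : Fin 6) (b : RK hexagon) :
    uK hexagon i * (vK hexagon j * b) = vK hexagon j * (uK hexagon i * b) := by
  rw [← mul_assoc, uv_swap, mul_assoc]

lemma uub_swap (i j : Fin 6) (b : RK hexagon) :
    uK hexagon i * (uK hexagon j * b) = -(uK hexagon j * (uK hexagon i * b)) := by
  rw [← mul_assoc, uu_swap]
  exact (RKneg_mul _ _).trans (RKneg_inj (mul_assoc _ _ _))

lemma vvb_zero (i j : Fin 6) (b : RK hexagon) (h1 : ([i, j] : List (Fin 6)).Nodup)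
    (h2 : IsMNF hexagon ([i, j] : List (Fin 6)).toFinset) :
    vK hexagon i * (vK hexagon j * b) = 0 := by
  rw [← mul_assoc, vv_zero i j h1 h2, zero_mul]

lemma listMon_nil : listMon hexagon [] = 1 := rfl

lemma listMon_cons (g : G6) (l : List G6) :
    listMon hexagon (g :: l) = mkRK hexagon (FreeAlgebra.ι ℚ g) * listMon hexagon l := by
  simp [listMon]

lemma listMon_append (l₁ l₂ : List G6) :
    listMon hexagon (l₁ ++ l₂) = listMon hexagon l₁ * listMon hexagon l₂ := by
  simp [listMon]

lemma mkRK_wd (l : List G6) : mkRK hexagon (wd l) = listMon hexagon l := by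
  induction l with
  | nil => simp [wd_nil, listMon_nil]
  | cons g l ih => rw [wd_cons, map_mul, ih, listMon_cons]

lemma mem_listMon (l : List G6) :
    listMon hexagon l ∈ gradePiece hexagon ((l.map genDeg).sum) :=
  Submodule.subset_span ⟨l, rfl, rfl⟩

lemma uK_eq_listMon (i : Fin 6) : uK hexagon i = listMon hexagon [inl i] := by
  simp [listMon, uK, uF]

lemma vK_eq_listMon (i : Fin 6) : vK hexagon i = listMon hexagon [inr i] := by
  simp [listMon, vK, vF]

lemma mem_u (i : Fin 6) : uK hexagon i ∈ gradePiece hexagon 1 := by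
  rw [uK_eq_listMon]; exact mem_listMon [inl i]

lemma mem_v (i : Fin 6) : vK hexagon i ∈ gradePiece hexagon 2 := by
  rw [vK_eq_listMon]; exact mem_listMon [inr i]

lemma mem_one : (1 : RK hexagon) ∈ gradePiece hexagon 0 := mem_listMon []

lemma gp_mul {m n : ℕ} {a b : RK hexagon} (ha : a ∈ gradePiece hexagon m)
    (hb : b ∈ gradePiece hexagon n) : a * b ∈ gradePiece hexagon (m + n) := by
  refine Submodule.span_induction
    (p := fun x _ => x * b ∈ gradePiece hexagon (m + n)) ?_ ?_ ?_ ?_ ha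
  · rintro x ⟨l, hl, rfl⟩
    refine Submodule.span_induction
      (p := fun y _ => listMon hexagon l * y ∈ gradePiece hexagon (m + n)) ?_ ?_ ?_ ?_ hb
    · rintro y ⟨l', hl', rfl⟩
      rw [← listMon_append]
      exact Submodule.subset_span ⟨l ++ l', by simp [hl, hl'], rfl⟩
    · simp
    · intro x' y' _ _ h1 h2; rw [mul_add]; exact Submodule.add_mem _ h1 h2
    · intro r x' _ h; rw [mul_smul_comm]; exact Submodule.smul_mem _ _ h
  · simp
  · intro x y _ _ h1 h2; rw [add_mul]; exact Submodule.add_mem _ h1 h2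
  · intro r x _ h; rw [smul_mul_assoc]; exact Submodule.smul_mem _ _ h

lemma gp_mul' {m n k : ℕ} {a b : RK hexagon} (ha : a ∈ gradePiece hexagon m)
    (hb : b ∈ gradePiece hexagon n) (h : m + n = k) : a * b ∈ gradePiece hexagon k :=
  h ▸ gp_mul ha hb

variable {d : RK hexagon →ₗ[ℚ] RK hexagon}

lemma d_one (hd : IsKoszulDiff hexagon d) : d 1 = 0 := by
  have h := hd.2.2.1 0 1 mem_one 1
  simp only [one_mul, pow_zero, one_smul, mul_one] at h
  have h2 : d 1 + d 1 = d 1 + 0 := by rw [← h, add_zero]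
  exact (add_left_cancel h2)

lemma d_u_mul (hd : IsKoszulDiff hexagon d) (i : Fin 6) (b : RK hexagon) :
    d (uK hexagon i * b) = vK hexagon i * b + -(uK hexagon i * d b) := by
  have h := hd.2.2.1 1 (uK hexagon i) (mem_u i) b
  rw [hd.1 i, pow_one, RKneg_one_smul] at h
  exact h

lemma d_v_mul (hd : IsKoszulDiff hexagon d) (i : Fin 6) (b : RK hexagon) :
    d (vK hexagon i * b) = vK hexagon i * d b := by
  have h := hd.2.1 i
  have h2 := hd.2.2.1 2 (vK hexagon i) (mem_v i) b
  rw [h] at h2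
  simpa using h2

lemma d_u (hd : IsKoszulDiff hexagon d) (i : Fin 6) : d (uK hexagon i) = vK hexagon i := hd.1 i
lemma d_v (hd : IsKoszulDiff hexagon d) (i : Fin 6) : d (vK hexagon i) = 0 := hd.2.1 i

end RKComp


section Master

open Sum

/-- The "formal derivative" of a word, in the free algebra. -/
noncomputable def Dt : List G6 → FA (Fin 6)
  | [] => 0
  | Sum.inl i :: l => vF i * wd l - uF i * Dt l
  | Sum.inr i :: l => vF i * Dt l

lemma Dt_nil : Dt [] = 0 := rfl
lemma Dt_cons_inl (i : Fin 6) (l : List G6) :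
    Dt (inl i :: l) = vF i * wd l - uF i * Dt l := rfl
lemma Dt_cons_inr (i : Fin 6) (l : List G6) : Dt (inr i :: l) = vF i * Dt l := rfl

lemma mkRK_iota_inl (i : Fin 6) :
    mkRK hexagon (FreeAlgebra.ι ℚ (inl i : G6)) = uK hexagon i := rfl
lemma mkRK_iota_inr (i : Fin 6) :
    mkRK hexagon (FreeAlgebra.ι ℚ (inr i : G6)) = vK hexagon i := rfl

variable {d : RK hexagon →ₗ[ℚ] RK hexagon}

lemma d_wd (hd : IsKoszulDiff hexagon d) :
    ∀ l : List G6, d (mkRK hexagon (wd l)) = mkRK hexagon (Dt l)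
  | [] => by rw [wd_nil, map_one, d_one hd, Dt_nil, map_zero]
  | (inl i) :: l => by
    rw [wd_cons, map_mul, mkRK_iota_inl, d_u_mul hd, d_wd hd l, Dt_cons_inl, mkRK_sub,
      map_mul, map_mul]
    rfl
  | (inr i) :: l => by
    rw [wd_cons, map_mul, mkRK_iota_inr, d_v_mul hd, d_wd hd l, Dt_cons_inr, map_mul]
    rfl

lemma d_mem (hd : IsKoszulDiff hexagon d) (z : RK hexagon) :
    ∃ F ∈ Submodule.span ℚ (Set.range Dt), d z = mkRK hexagon F := by
  obtain ⟨y, rfl⟩ := RingQuot.mkAlgHom_surjective ℚ (RKRel hexagon) z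
  have hy : y ∈ Submodule.span ℚ (Set.range wd) := by
    rw [span_words_top]; exact Submodule.mem_top
  set L : FA (Fin 6) →ₗ[ℚ] RK hexagon := d.comp (mkRK hexagon).toLinearMap with hL
  set M : FA (Fin 6) →ₗ[ℚ] RK hexagon := (mkRK hexagon).toLinearMap with hM
  have h1 : L y ∈ Submodule.map L (Submodule.span ℚ (Set.range wd)) :=
    Submodule.mem_map_of_mem hy
  rw [Submodule.map_span] at h1
  have h2 : Submodule.span ℚ (⇑L '' Set.range wd)
      ≤ Submodule.map M (Submodule.span ℚ (Set.range Dt)) := by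
    rw [Submodule.span_le]
    rintro x ⟨w, ⟨l, rfl⟩, rfl⟩
    have : L (wd l) = M (Dt l) := d_wd hd l
    rw [this]
    exact Submodule.mem_map_of_mem (Submodule.subset_span ⟨l, rfl⟩)
  obtain ⟨F, hF, hF2⟩ := h2 h1
  exact ⟨F, hF, hF2.symm⟩

/-- The value of `phiT` on a prefixed formal derivative. -/
noncomputable def Efun : List G6 → List G6 → ℚ
  | _, [] => 0
  | p, Sum.inl i :: l => phif (p ++ inr i :: l) + -(Efun (p ++ [inl i]) l)
  | p, Sum.inr i :: l => Efun (p ++ [inr i]) l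

lemma Efun_nil (p : List G6) : Efun p [] = 0 := rfl
lemma Efun_cons_inl (p : List G6) (i : Fin 6) (l : List G6) :
    Efun p (inl i :: l) = phif (p ++ inr i :: l) + -(Efun (p ++ [inl i]) l) := rfl
lemma Efun_cons_inr (p : List G6) (i : Fin 6) (l : List G6) :
    Efun p (inr i :: l) = Efun (p ++ [inr i]) l := rfl

lemma phiT_Dt : ∀ (l p : List G6), phiT (wd p * Dt l) = Efun p l
  | [], p => by rw [Dt_nil, mul_zero, map_zero, Efun_nil]
  | (inl i) :: l, p => by
    rw [Dt_cons_inl, mul_sub, map_sub, Efun_cons_inl]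
    have e1 : wd p * (vF i * wd l) = wd (p ++ inr i :: l) := by
      rw [show vF i = wd [inr i] by simp [wd, vF], ← wd_append, ← wd_append]
      rfl
    have e2 : wd p * (uF i * Dt l) = wd (p ++ [inl i]) * Dt l := by
      rw [show uF i = wd [inl i] by simp [wd, uF], ← mul_assoc, ← wd_append]
    rw [e1, e2, phiT_wd, phiT_Dt l (p ++ [inl i])]
    ring
  | (inr i) :: l, p => by
    rw [Dt_cons_inr, Efun_cons_inr]
    have e2 : wd p * (vF i * Dt l) = wd (p ++ [inr i]) * Dt l := by
      rw [show vF i = wd [inr i] by simp [wd, vF], ← mul_assoc, ← wd_append]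
    rw [e2, phiT_Dt l (p ++ [inr i])]

/-- Value of a single replacement term, independent of the position. -/
noncomputable def Wf (m : List G6) (x : Fin 6) : ℚ :=
  (if (↑(m.map genIdx) : Multiset (Fin 6)) = fullM then 1 else 0) *
    (coefE (x ::ₘ (↑(vIdx m) : Multiset (Fin 6))) : ℚ) *
    (-1 : ℚ) ^ ((uIdx m).countP (fun y => decide (y < x)) + inv6 (uIdx m))

lemma uIdx_mem_map {y : Fin 6} {p : List G6} (h : y ∈ uIdx p) : y ∈ p.map genIdx := by
  rw [uIdx] at h
  obtain ⟨g, hg, hg2⟩ := List.mem_filterMap.mp h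
  cases g with
  | inl a =>
    have ha : a = y := by simpa using hg2
    subst ha
    exact List.mem_map.mpr ⟨inl a, hg, rfl⟩
  | inr a => simp at hg2

lemma rank_exponent (up ul : List (Fin 6)) (x : Fin 6) (h : ∀ y ∈ up, y ≠ x) :
    up.length + ((up ++ x :: ul).countP (fun y => decide (y < x)) + inv6 (up ++ x :: ul))
      = 2 * (up.length + ul.countP (fun y => decide (y < x))) + inv6 (up ++ ul) := by
  rw [inv6_insert, List.countP_append, List.countP_cons]
  have hx : (decide (x < x) : Bool) = false := by simp
  simp only [hx, Bool.false_eq_true, if_false]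
  have hs := countP_ne_split x up h
  omega

lemma rankL (p l : List G6) (x : Fin 6) :
    phif (p ++ inr x :: l) = (-1 : ℚ) ^ (uIdx p).length * Wf (p ++ inl x :: l) x := by
  have hind : ((p ++ inr x :: l).map genIdx : List (Fin 6))
      = ((p ++ inl x :: l).map genIdx) := by simp
  rw [phif, Wf, hind]
  have hv : (↑(vIdx (p ++ inr x :: l)) : Multiset (Fin 6))
      = x ::ₘ (↑(vIdx (p ++ inl x :: l)) : Multiset (Fin 6)) := by
    simp only [vIdx_append, vIdx_cons_inr, vIdx_cons_inl]
    rw [Multiset.cons_coe, Multiset.coe_eq_coe]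
    exact List.perm_middle
  rw [hv]
  by_cases hfull : ((↑((p ++ inl x :: l).map genIdx) : Multiset (Fin 6)) = fullM)
  · rw [if_pos hfull]
    simp only [uIdx_append, uIdx_cons_inr, uIdx_cons_inl]
    have hne : ∀ y ∈ uIdx p, y ≠ x := by
      intro y hy hyx
      subst hyx
      have hnd : ((p ++ inl y :: l).map genIdx).Nodup := by
        have : (↑((p ++ inl y :: l).map genIdx) : Multiset (Fin 6)).Nodup := by
          rw [hfull]; exact fullM_nodup
        simpa using this
      simp only [List.map_append, List.map_cons, genIdx_inl] at hnd
      rcases List.nodup_append'.mp hnd with ⟨-, -, hdisj⟩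
      exact hdisj (uIdx_mem_map hy) (by simp)
    have hexp := rank_exponent (uIdx p) (uIdx l) x hne
    have hpow : (-1 : ℚ) ^ (uIdx p).length *
        (-1 : ℚ) ^ ((uIdx p ++ x :: uIdx l).countP (fun y => decide (y < x))
          + inv6 (uIdx p ++ x :: uIdx l))
        = (-1 : ℚ) ^ inv6 (uIdx p ++ uIdx l) := by
      rw [← pow_add]; exact neg_one_pow_eq_of_add_even hexp
    rw [← hpow]
    ring
  · rw [if_neg hfull]
    ring

end Master


section Master2

open Sum

def cntInl (l : List G6) (x : Fin 6) : ℕ := (uIdx l).count x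

lemma cntInl_nil (x : Fin 6) : cntInl [] x = 0 := rfl

lemma cntInl_cons_inl (i x : Fin 6) (l : List G6) :
    cntInl (inl i :: l) x = cntInl l x + if x = i then 1 else 0 := by
  rw [cntInl, cntInl, uIdx_cons_inl, List.count_cons]
  by_cases h : x = i <;> simp [h]
  exact fun hh => h hh.symm

lemma cntInl_cons_inr (i x : Fin 6) (l : List G6) :
    cntInl (inr i :: l) x = cntInl l x := by
  rw [cntInl, cntInl, uIdx_cons_inr]

lemma genIdx_split : ∀ l : List G6,
    (↑(l.map genIdx) : Multiset (Fin 6)) = ↑(vIdx l) + ↑(uIdx l)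
  | [] => rfl
  | (inl i) :: l => by
    simp only [List.map_cons, genIdx_inl, vIdx_cons_inl, uIdx_cons_inl,
      ← Multiset.cons_coe, genIdx_split l]
    rw [Multiset.add_cons]
  | (inr i) :: l => by
    simp only [List.map_cons, genIdx_inr, vIdx_cons_inr, uIdx_cons_inr,
      ← Multiset.cons_coe, genIdx_split l]
    rw [Multiset.cons_add]

lemma E_closed : ∀ (l p : List G6),
    Efun p l = (-1 : ℚ) ^ (uIdx p).length *
      ∑ x : Fin 6, ((cntInl l x : ℚ) * Wf (p ++ l) x)
  | [], p => by simp [Efun_nil, cntInl_nil]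
  | (inl i) :: l, p => by
    rw [Efun_cons_inl, E_closed l (p ++ [inl i]), rankL p l i]
    have happ : (p ++ [inl i]) ++ l = p ++ inl i :: l := by simp
    have hlen : (uIdx (p ++ [inl i])).length = (uIdx p).length + 1 := by simp
    rw [happ, hlen]
    have hsum : ∑ x : Fin 6, ((cntInl (inl i :: l) x : ℚ)
          * Wf (p ++ inl i :: l) x)
        = Wf (p ++ inl i :: l) i
          + ∑ x : Fin 6, ((cntInl l x : ℚ) * Wf (p ++ inl i :: l) x) := by
      have hterm : ∀ x : Fin 6, ((cntInl (inl i :: l) x : ℚ)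
            * Wf (p ++ inl i :: l) x)
          = (if x = i then Wf (p ++ inl i :: l) x else 0)
            + (cntInl l x : ℚ) * Wf (p ++ inl i :: l) x := by
        intro x
        rw [cntInl_cons_inl]
        by_cases h : x = i
        · subst h; simp; ring
        · simp [h]
      rw [Finset.sum_congr rfl (fun x _ => hterm x), Finset.sum_add_distrib,
        Finset.sum_ite_eq' Finset.univ i]
      simp
    rw [hsum]
    ring
  | (inr i) :: l, p => by
    rw [Efun_cons_inr, E_closed l (p ++ [inr i])]
    have happ : (p ++ [inr i]) ++ l = p ++ inr i :: l := by simp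
    have hlen : (uIdx (p ++ [inr i])).length = (uIdx p).length := by simp
    rw [happ, hlen]
    have hcnt : ∑ x : Fin 6, ((cntInl (inr i :: l) x : ℚ) * Wf (p ++ inr i :: l) x)
        = ∑ x : Fin 6, ((cntInl l x : ℚ) * Wf (p ++ inr i :: l) x) :=
      Finset.sum_congr rfl fun x _ => by rw [cntInl_cons_inr]
    rw [hcnt]

lemma phiT_Dt_zero (l : List G6) : phiT (Dt l) = 0 := by
  have h0 : phiT (Dt l) = Efun [] l := by
    have := phiT_Dt l []
    rw [wd_nil, one_mul] at this
    exact this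
  rw [h0, E_closed l [], uIdx_nil]
  simp only [List.length_nil, pow_zero, one_mul, List.nil_append]
  by_cases hfull : ((↑(l.map genIdx) : Multiset (Fin 6)) = fullM)
  · have hum : fullM - (↑(vIdx l) : Multiset (Fin 6)) = ↑(uIdx l) := by
      rw [← hfull, genIdx_split l]
      exact add_tsub_cancel_left _ _
    have hvm : (↑(vIdx l) : Multiset (Fin 6)) ∈ fullM.powerset := by
      rw [Multiset.mem_powerset, ← hfull, genIdx_split l]
      exact le_add_right (le_refl _)
    have key := Fzero (↑(vIdx l)) hvm
    rw [hum] at key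
    have hcast : ((Ffun (↑(vIdx l)) (↑(uIdx l)) : ℤ) : ℚ)
        = ∑ x : Fin 6, ((cntInl l x : ℚ) * (coefE (x ::ₘ ↑(vIdx l)) : ℚ)
            * (-1 : ℚ) ^ ((uIdx l).countP (fun y => decide (y < x)))) := by
      rw [Ffun]
      push_cast
      refine Finset.sum_congr rfl fun x _ => ?_
      rw [Multiset.coe_count, Multiset.coe_countP, cntInl]
      have hcp : List.countP (fun b => decide (decide (b < x) = true)) (uIdx l)
          = List.countP (fun y => decide (y < x)) (uIdx l) :=
        List.countP_congr fun y _ => by simp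
      rw [hcp]
    have : ∑ x : Fin 6, ((cntInl l x : ℚ) * Wf l x)
        = ((Ffun (↑(vIdx l)) (↑(uIdx l)) : ℤ) : ℚ) * (-1 : ℚ) ^ inv6 (uIdx l) := by
      rw [hcast, Finset.sum_mul]
      refine Finset.sum_congr rfl fun x _ => ?_
      rw [Wf, if_pos hfull, pow_add]
      ring
    rw [this, key]
    push_cast
    ring
  · have : ∀ x : Fin 6, Wf l x = 0 := by
      intro x; rw [Wf, if_neg hfull]; ring
    simp [this]

def wWord : List G6 := [inr 0, inr 1, inl 2, inl 3, inl 4, inl 5]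

lemma phif_wWord : phif wWord = 1 := by
  have h1 : (↑(wWord.map genIdx) : Multiset (Fin 6)) = fullM := by decide
  have hv : coefE (↑(vIdx wWord)) = 1 := by decide
  have hu : inv6 (uIdx wWord) = 0 := by decide
  rw [phif, h1, hv, hu, if_pos rfl]
  norm_num

variable {d : RK hexagon →ₗ[ℚ] RK hexagon}

lemma w_not_exact (hd : IsKoszulDiff hexagon d) :
    ¬ ∃ z : RK hexagon, mkRK hexagon (wd wWord) = d z := by
  rintro ⟨z, hz⟩
  obtain ⟨F, hF, hdF⟩ := d_mem hd z
  have he : phiT (wd wWord) = phiT F := phiT_mk_eq (by rw [hz, hdF])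
  have h1 : phiT (wd wWord) = 1 := by rw [phiT_wd, phif_wWord]
  have h0 : phiT F = 0 := by
    refine Submodule.span_induction (p := fun x _ => phiT x = 0) ?_ ?_ ?_ ?_ hF
    · rintro x ⟨l, rfl⟩; exact phiT_Dt_zero l
    · simp
    · intro a b _ _ ha hb; rw [map_add, ha, hb, add_zero]
    · intro r a _ ha; rw [map_smul, ha, smul_zero]
  rw [h1, h0] at he
  exact one_ne_zero he

end Master2


section DefSysConstr

open Sum

lemma mnf_pair (i j : Fin 6) (hne : i ≠ j)
    (h : ¬ ∃ k : Fin 6, ({i, j} : Finset (Fin 6)) ⊆ {k, k + 1}) :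
    IsMNF hexagon ([i, j] : List (Fin 6)).toFinset := by
  have he : ([i, j] : List (Fin 6)).toFinset = {i, j} := by simp
  rw [he]
  constructor
  · exact h
  · intro J hJ
    have hcard2 : ({i, j} : Finset (Fin 6)).card ≤ 2 := by
      refine le_trans (Finset.card_insert_le i {j}) ?_
      simp
    have h1 : J.card ≤ 1 := by
      have := Finset.card_lt_card hJ
      omega
    by_cases hJe : J = ∅
    · rw [hJe]; exact hexagon.empty_mem
    · obtain ⟨a, ha⟩ := Finset.nonempty_of_ne_empty hJe
      have : J = {a} := Finset.eq_singleton_iff_unique_mem.mpr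
        ⟨ha, fun b hb => Finset.card_le_one.mp h1 b hb a ha⟩
      rw [this]; exact hexagon.singleton_mem a

-- minimal non-face products that vanish
lemma v03 : vK hexagon 0 * vK hexagon 3 = 0 :=
  vv_zero 0 3 (by decide) (mnf_pair 0 3 (by decide) (by decide))
lemma v14 : vK hexagon 1 * vK hexagon 4 = 0 :=
  vv_zero 1 4 (by decide) (mnf_pair 1 4 (by decide) (by decide))
lemma v25 : vK hexagon 2 * vK hexagon 5 = 0 :=
  vv_zero 2 5 (by decide) (mnf_pair 2 5 (by decide) (by decide))
lemma v04 : vK hexagon 0 * vK hexagon 4 = 0 :=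
  vv_zero 0 4 (by decide) (mnf_pair 0 4 (by decide) (by decide))
lemma v15 : vK hexagon 1 * vK hexagon 5 = 0 :=
  vv_zero 1 5 (by decide) (mnf_pair 1 5 (by decide) (by decide))
lemma v24 : vK hexagon 2 * vK hexagon 4 = 0 :=
  vv_zero 2 4 (by decide) (mnf_pair 2 4 (by decide) (by decide))
lemma v02 : vK hexagon 0 * vK hexagon 2 = 0 :=
  vv_zero 0 2 (by decide) (mnf_pair 0 2 (by decide) (by decide))

lemma vvb_zero' (i j : Fin 6) (b : RK hexagon) (h : vK hexagon i * vK hexagon j = 0) :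
    vK hexagon i * (vK hexagon j * b) = 0 := by
  rw [← mul_assoc, h, zero_mul]

lemma hexClass1 : hexClass 1 = vK hexagon 0 * uK hexagon 3 := by
  rw [hexClass]; norm_num
lemma hexClass2 : hexClass 2 = vK hexagon 1 * uK hexagon 4 := by
  rw [hexClass]; norm_num; rfl
lemma hexClass3 : hexClass 3 = vK hexagon 2 * uK hexagon 5 := by
  rw [hexClass]; norm_num

noncomputable def cA : RK hexagon :=
  -(vK hexagon 0 * (uK hexagon 1 * (uK hexagon 3 * uK hexagon 4)))
noncomputable def cB : RK hexagon :=
  -(vK hexagon 1 * (uK hexagon 2 * (uK hexagon 4 * uK hexagon 5)))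
noncomputable def cB' : RK hexagon :=
  -(vK hexagon 2 * (uK hexagon 1 * (uK hexagon 4 * uK hexagon 5)))

noncomputable def csys (a b : RK hexagon) : ℕ → ℕ → RK hexagon
  | 1, 2 => hexClass 1
  | 2, 3 => hexClass 2
  | 3, 4 => hexClass 3
  | 1, 3 => a
  | 2, 4 => b
  | _, _ => 0

variable {d : RK hexagon →ₗ[ℚ] RK hexagon}

lemma d_hex1 (hd : IsKoszulDiff hexagon d) : d (hexClass 1) = 0 := by
  rw [hexClass1, d_v_mul hd, d_u hd, v03]
lemma d_hex2 (hd : IsKoszulDiff hexagon d) : d (hexClass 2) = 0 := by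
  rw [hexClass2, d_v_mul hd, d_u hd, v14]
lemma d_hex3 (hd : IsKoszulDiff hexagon d) : d (hexClass 3) = 0 := by
  rw [hexClass3, d_v_mul hd, d_u hd, v25]

lemma vvb_swap (i j : Fin 6) (b : RK hexagon) :
    vK hexagon i * (vK hexagon j * b) = vK hexagon j * (vK hexagon i * b) := by
  rw [← mul_assoc, vv_swap, mul_assoc]

lemma prod12 : hexClass 1 * hexClass 2 = vK hexagon 0 * (vK hexagon 1 * (uK hexagon 3 * uK hexagon 4)) := by
  rw [hexClass1, hexClass2, mul_assoc, uvb_swap]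
lemma prod23 : hexClass 2 * hexClass 3 = vK hexagon 1 * (vK hexagon 2 * (uK hexagon 4 * uK hexagon 5)) := by
  rw [hexClass2, hexClass3, mul_assoc, uvb_swap]

lemma d_cA (hd : IsKoszulDiff hexagon d) : d cA = -(hexClass 1 * hexClass 2) := by
  have e2 : d (uK hexagon 3 * uK hexagon 4)
      = vK hexagon 3 * uK hexagon 4 + -(vK hexagon 4 * uK hexagon 3) := by
    rw [d_u_mul hd, d_u hd, uv_swap]
  have e3 : d (uK hexagon 1 * (uK hexagon 3 * uK hexagon 4))
      = vK hexagon 1 * (uK hexagon 3 * uK hexagon 4)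
        + -(vK hexagon 3 * (uK hexagon 1 * uK hexagon 4)
            + -(vK hexagon 4 * (uK hexagon 1 * uK hexagon 3))) := by
    rw [d_u_mul hd, e2, mul_add, RKmul_neg, uvb_swap, uvb_swap]
  have e4 : d (vK hexagon 0 * (uK hexagon 1 * (uK hexagon 3 * uK hexagon 4)))
      = vK hexagon 0 * (vK hexagon 1 * (uK hexagon 3 * uK hexagon 4)) := by
    rw [d_v_mul hd, e3, mul_add, RKmul_neg, mul_add, RKmul_neg, vvb_zero' 0 3 _ v03, vvb_zero' 0 4 _ v04, RKneg_zero, add_zero, RKneg_zero,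
      add_zero]
  rw [cA, d_neg, e4, prod12]

lemma d_cB (hd : IsKoszulDiff hexagon d) : d cB = -(hexClass 2 * hexClass 3) := by
  have e2 : d (uK hexagon 4 * uK hexagon 5)
      = vK hexagon 4 * uK hexagon 5 + -(vK hexagon 5 * uK hexagon 4) := by
    rw [d_u_mul hd, d_u hd, uv_swap]
  have e3 : d (uK hexagon 2 * (uK hexagon 4 * uK hexagon 5))
      = vK hexagon 2 * (uK hexagon 4 * uK hexagon 5)
        + -(vK hexagon 4 * (uK hexagon 2 * uK hexagon 5)
            + -(vK hexagon 5 * (uK hexagon 2 * uK hexagon 4))) := by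
    rw [d_u_mul hd, e2, mul_add, RKmul_neg, uvb_swap, uvb_swap]
  have e4 : d (vK hexagon 1 * (uK hexagon 2 * (uK hexagon 4 * uK hexagon 5)))
      = vK hexagon 1 * (vK hexagon 2 * (uK hexagon 4 * uK hexagon 5)) := by
    rw [d_v_mul hd, e3, mul_add, RKmul_neg, mul_add, RKmul_neg, vvb_zero' 1 4 _ v14, vvb_zero' 1 5 _ v15, RKneg_zero, add_zero, RKneg_zero,
      add_zero]
  rw [cB, d_neg, e4, prod23]

lemma d_cB' (hd : IsKoszulDiff hexagon d) : d cB' = -(hexClass 2 * hexClass 3) := by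
  have e2 : d (uK hexagon 4 * uK hexagon 5)
      = vK hexagon 4 * uK hexagon 5 + -(vK hexagon 5 * uK hexagon 4) := by
    rw [d_u_mul hd, d_u hd, uv_swap]
  have e3 : d (uK hexagon 1 * (uK hexagon 4 * uK hexagon 5))
      = vK hexagon 1 * (uK hexagon 4 * uK hexagon 5)
        + -(vK hexagon 4 * (uK hexagon 1 * uK hexagon 5)
            + -(vK hexagon 5 * (uK hexagon 1 * uK hexagon 4))) := by
    rw [d_u_mul hd, e2, mul_add, RKmul_neg, uvb_swap, uvb_swap]
  have e4 : d (vK hexagon 2 * (uK hexagon 1 * (uK hexagon 4 * uK hexagon 5)))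
      = vK hexagon 2 * (vK hexagon 1 * (uK hexagon 4 * uK hexagon 5)) := by
    rw [d_v_mul hd, e3, mul_add, RKmul_neg, mul_add, RKmul_neg, vvb_zero' 2 4 _ v24, vvb_zero' 2 5 _ v25, RKneg_zero, add_zero, RKneg_zero,
      add_zero]
  rw [cB', d_neg, e4, vvb_swap, prod23]

-- products for the value computation
lemma prod_1_cB : hexClass 1 * cB = vK hexagon 0 * (vK hexagon 1 * (uK hexagon 2 * (uK hexagon 3 * (uK hexagon 4 * uK hexagon 5)))) := by
  rw [hexClass1, cB, RKmul_neg, mul_assoc, uvb_swap, uub_swap 3 2, RKmul_neg, RKmul_neg,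
    RKneg_neg]
lemma prod_1_cB' : hexClass 1 * cB' = 0 := by
  rw [hexClass1, cB', RKmul_neg, mul_assoc, uvb_swap, vvb_zero' 0 2 _ v02,
    RKneg_zero]
lemma prod_cA_3 : cA * hexClass 3 = 0 := by
  rw [hexClass3, cA, RKneg_mul, mul_assoc, mul_assoc, mul_assoc, uvb_swap 4 2, uvb_swap 3 2,
    uvb_swap 1 2, vvb_zero' 0 2 _ v02, RKneg_zero]

lemma mem_listMon' (l : List G6) (n : ℕ) (h : (l.map genDeg).sum = n) :
    listMon hexagon l ∈ gradePiece hexagon n :=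
  Submodule.subset_span ⟨l, h, rfl⟩

lemma listMon2 (i j : Fin 6) :
    listMon hexagon [inr i, inl j] = vK hexagon i * uK hexagon j := by
  rw [listMon_cons, listMon_cons, listMon_nil, mul_one, mkRK_iota_inr, mkRK_iota_inl]

lemma listMon4 (i a b c : Fin 6) :
    listMon hexagon [inr i, inl a, inl b, inl c]
      = vK hexagon i * (uK hexagon a * (uK hexagon b * uK hexagon c)) := by
  rw [listMon_cons, listMon_cons, listMon_cons, listMon_cons, listMon_nil, mul_one,
    mkRK_iota_inr, mkRK_iota_inl, mkRK_iota_inl, mkRK_iota_inl]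

lemma mem_hex1 : hexClass 1 ∈ gradePiece hexagon 3 := by
  rw [hexClass1, ← listMon2]
  exact mem_listMon' _ 3 rfl
lemma mem_hex2 : hexClass 2 ∈ gradePiece hexagon 3 := by
  rw [hexClass2, ← listMon2]
  exact mem_listMon' _ 3 rfl
lemma mem_hex3 : hexClass 3 ∈ gradePiece hexagon 3 := by
  rw [hexClass3, ← listMon2]
  exact mem_listMon' _ 3 rfl

lemma mem_cA : cA ∈ gradePiece hexagon 5 := by
  rw [cA, ← listMon4]
  exact neg_mem (mem_listMon' _ 5 rfl)
lemma mem_cB : cB ∈ gradePiece hexagon 5 := by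
  rw [cB, ← listMon4]
  exact neg_mem (mem_listMon' _ 5 rfl)
lemma mem_cB' : cB' ∈ gradePiece hexagon 5 := by
  rw [cB', ← listMon4]
  exact neg_mem (mem_listMon' _ 5 rfl)

lemma sd12 : sysDeg (fun _ => 3) 1 2 = 3 := by decide
lemma sd23 : sysDeg (fun _ => 3) 2 3 = 3 := by decide
lemma sd34 : sysDeg (fun _ => 3) 3 4 = 3 := by decide
lemma sd13 : sysDeg (fun _ => 3) 1 3 = 5 := by decide
lemma sd24 : sysDeg (fun _ => 3) 2 4 = 5 := by decide

/-- A defining system for the hexagon triple Massey product, with prescribed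
`(1,3)` and `(2,4)` entries. -/
noncomputable def CS (d : RK hexagon →ₗ[ℚ] RK hexagon) (hd : IsKoszulDiff hexagon d)
    (b : RK hexagon) (hb5 : b ∈ gradePiece hexagon 5)
    (hdb : d b = -(hexClass 2 * hexClass 3)) :
    DefSys (⇑d) (totalHomog hexagon) 3 (fun _ => 3) hexClass where
  c := csys cA b
  homog_c := by
    intro i j h1 h2 h3 h4
    have hcase : (i = 1 ∧ j = 2) ∨ (i = 1 ∧ j = 3) ∨ (i = 1 ∧ j = 4) ∨ (i = 2 ∧ j = 3)
        ∨ (i = 2 ∧ j = 4) ∨ (i = 3 ∧ j = 4) := by omega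
    rcases hcase with ⟨rfl, rfl⟩ | ⟨rfl, rfl⟩ | ⟨rfl, rfl⟩ | ⟨rfl, rfl⟩ | ⟨rfl, rfl⟩ | ⟨rfl, rfl⟩
    · rw [sd12]; exact mem_hex1
    · rw [sd13]; exact mem_cA
    · exact absurd rfl h4
    · rw [sd23]; exact mem_hex2
    · rw [sd24]; exact hb5
    · rw [sd34]; exact mem_hex3
  c_diag := by
    intro i h1 h2
    have hcase : i = 1 ∨ i = 2 ∨ i = 3 := by omega
    rcases hcase with rfl | rfl | rfl <;> rfl
  d_c := by
    intro i j h1 h2 h3 h4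
    have hcase : (i = 1 ∧ j = 2) ∨ (i = 1 ∧ j = 3) ∨ (i = 1 ∧ j = 4) ∨ (i = 2 ∧ j = 3)
        ∨ (i = 2 ∧ j = 4) ∨ (i = 3 ∧ j = 4) := by omega
    rcases hcase with ⟨rfl, rfl⟩ | ⟨rfl, rfl⟩ | ⟨rfl, rfl⟩ | ⟨rfl, rfl⟩ | ⟨rfl, rfl⟩ | ⟨rfl, rfl⟩
    · rw [show Finset.Ioo 1 2 = (∅ : Finset ℕ) from by decide, Finset.sum_empty]
      exact d_hex1 hd
    · rw [show Finset.Ioo 1 3 = ({2} : Finset ℕ) from by decide, Finset.sum_singleton, sd12]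
      rw [show csys cA b 1 3 = cA from rfl, show csys cA b 1 2 = hexClass 1 from rfl,
        show csys cA b 2 3 = hexClass 2 from rfl]
      rw [d_cA hd]
      rw [show ((-1 : ℚ) ^ 3) = -1 from by norm_num, RKneg_one_smul]
    · exact absurd rfl h4
    · rw [show Finset.Ioo 2 3 = (∅ : Finset ℕ) from by decide, Finset.sum_empty]
      exact d_hex2 hd
    · rw [show Finset.Ioo 2 4 = ({3} : Finset ℕ) from by decide, Finset.sum_singleton, sd23]
      rw [show csys cA b 2 4 = b from rfl, show csys cA b 2 3 = hexClass 2 from rfl,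
        show csys cA b 3 4 = hexClass 3 from rfl]
      rw [hdb]
      rw [show ((-1 : ℚ) ^ 3) = -1 from by norm_num, RKneg_one_smul]
    · rw [show Finset.Ioo 3 4 = (∅ : Finset ℕ) from by decide, Finset.sum_empty]
      exact d_hex3 hd

lemma val_eq (C : DefSys (⇑d) (totalHomog hexagon) 3 (fun _ => 3) hexClass) :
    C.val = C.c 1 2 * C.c 2 4 + C.c 1 3 * C.c 3 4 := by
  rw [DefSys.val]
  rw [show Finset.Ioo 1 (3 + 1) = ({2, 3} : Finset ℕ) from by decide]
  rw [Finset.sum_insert (by decide), Finset.sum_singleton, sd12, sd13]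
  rw [show ((-1 : ℚ) ^ 3) = -1 from by norm_num, show ((-1 : ℚ) ^ 5) = -1 from by norm_num,
    RKneg_one_smul, RKneg_one_smul, RKneg_add, RKneg_neg, RKneg_neg]

end DefSysConstr


section Final

open Sum

lemma RKsub_zero (a : RK hexagon) : a - 0 = a := sub_zero a

lemma wWord_eq : mkRK hexagon (wd wWord)
    = vK hexagon 0 * (vK hexagon 1 * (uK hexagon 2 * (uK hexagon 3
        * (uK hexagon 4 * uK hexagon 5)))) := by
  rw [mkRK_wd, wWord, listMon_cons, listMon_cons, listMon_cons, listMon_cons, listMon_cons,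
    listMon_cons, listMon_nil, mul_one, mkRK_iota_inr, mkRK_iota_inr, mkRK_iota_inl,
    mkRK_iota_inl, mkRK_iota_inl, mkRK_iota_inl]

variable {d : RK hexagon →ₗ[ℚ] RK hexagon}

lemma valCB (hd : IsKoszulDiff hexagon d) :
    (CS d hd cB mem_cB (d_cB hd)).val = mkRK hexagon (wd wWord) := by
  rw [val_eq]
  rw [show (CS d hd cB mem_cB (d_cB hd)).c 1 2 = hexClass 1 from rfl,
    show (CS d hd cB mem_cB (d_cB hd)).c 2 4 = cB from rfl,
    show (CS d hd cB mem_cB (d_cB hd)).c 1 3 = cA from rfl,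
    show (CS d hd cB mem_cB (d_cB hd)).c 3 4 = hexClass 3 from rfl]
  rw [prod_1_cB, prod_cA_3, add_zero, wWord_eq]

lemma valCB' (hd : IsKoszulDiff hexagon d) :
    (CS d hd cB' mem_cB' (d_cB' hd)).val = 0 := by
  rw [val_eq]
  rw [show (CS d hd cB' mem_cB' (d_cB' hd)).c 1 2 = hexClass 1 from rfl,
    show (CS d hd cB' mem_cB' (d_cB' hd)).c 2 4 = cB' from rfl,
    show (CS d hd cB' mem_cB' (d_cB' hd)).c 1 3 = cA from rfl,
    show (CS d hd cB' mem_cB' (d_cB' hd)).c 3 4 = hexClass 3 from rfl]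
  rw [prod_1_cB', prod_cA_3, add_zero]

end Final

/-- For the boundary complex `K` of a hexagon and the classes
`α_j = [v_j u_{j+3}] ∈ H^3(R(K), d)` (`j = 1, 2, 3`), the triple Massey product
`⟨α_1, α_2, α_3⟩ ⊆ H^8(R(K), d)` is defined, contains the zero class and also a nonzero
class; in particular it is defined but not strictly defined. -/
theorem statement5 (d : RK hexagon →ₗ[ℚ] RK hexagon) (hd : IsKoszulDiff hexagon d) :
    (∀ j : ℕ, 1 ≤ j → j ≤ 3 →
        hexClass j ∈ gradePiece hexagon 3 ∧ d (hexClass j) = 0) ∧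
    MasseyDefined (⇑d) (totalHomog hexagon) 3 (fun _ => 3) hexClass ∧
    (∀ C : DefSys (⇑d) (totalHomog hexagon) 3 (fun _ => 3) hexClass,
      C.val ∈ gradePiece hexagon 8) ∧
    (∃ C : DefSys (⇑d) (totalHomog hexagon) 3 (fun _ => 3) hexClass, ∃ z, C.val = d z) ∧
    (∃ C : DefSys (⇑d) (totalHomog hexagon) 3 (fun _ => 3) hexClass, ¬ ∃ z, C.val = d z) ∧
    ¬ MasseyStrict (⇑d) (totalHomog hexagon) 3 (fun _ => 3) hexClass := by
  refine ⟨?_, ?_, ?_, ?_, ?_, ?_⟩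
  · intro j hj1 hj3
    have hcase : j = 1 ∨ j = 2 ∨ j = 3 := by omega
    rcases hcase with rfl | rfl | rfl
    · exact ⟨mem_hex1, d_hex1 hd⟩
    · exact ⟨mem_hex2, d_hex2 hd⟩
    · exact ⟨mem_hex3, d_hex3 hd⟩
  · exact ⟨CS d hd cB mem_cB (d_cB hd)⟩
  · intro C
    have h12 : C.c 1 2 ∈ gradePiece hexagon 3 := by
      have h := C.homog_c 1 2 (by norm_num) (by norm_num) (by norm_num) (by simp)
      rwa [sd12] at h
    have h24 : C.c 2 4 ∈ gradePiece hexagon 5 := by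
      have h := C.homog_c 2 4 (by norm_num) (by norm_num) (by norm_num) (by simp)
      rwa [sd24] at h
    have h13 : C.c 1 3 ∈ gradePiece hexagon 5 := by
      have h := C.homog_c 1 3 (by norm_num) (by norm_num) (by norm_num) (by simp)
      rwa [sd13] at h
    have h34 : C.c 3 4 ∈ gradePiece hexagon 3 := by
      have h := C.homog_c 3 4 (by norm_num) (by norm_num) (by norm_num) (by simp)
      rwa [sd34] at h
    rw [val_eq C]
    have m1 : C.c 1 2 * C.c 2 4 ∈ gradePiece hexagon 8 := gp_mul' h12 h24 rfl
    have m2 : C.c 1 3 * C.c 3 4 ∈ gradePiece hexagon 8 := gp_mul' h13 h34 rfl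
    exact Submodule.add_mem _ m1 m2
  · exact ⟨CS d hd cB' mem_cB' (d_cB' hd), 0, by rw [valCB' hd, map_zero]⟩
  · refine ⟨CS d hd cB mem_cB (d_cB hd), ?_⟩
    rw [valCB hd]
    exact w_not_exact hd
  · intro hstr
    obtain ⟨z, hz⟩ := hstr (CS d hd cB mem_cB (d_cB hd)) (CS d hd cB' mem_cB' (d_cB' hd))
    refine w_not_exact hd ⟨z, ?_⟩
    rw [← hz, valCB hd, valCB' hd, RKsub_zero]

end MasseyPaper
end

section
/- Let n ≥ 2 and let \bar K(n) be the simplicial complex on [2n] whose minimal non-faces are the pairs {k, n+k+i} for 0 ≤ i ≤ n−1, 1 ≤ k ≤ n−i. Then the geometric realization |\bar K(n)| = ⋃_{σ ∈ \bar K(n), σ ≠ ∅} conv{e_i : i ∈ σ} ⊆ ℝ^{2n} (where e_1,…,e_{2n} is the standard basis), equipped with the subspace topology, is a contractible topological space. -/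
namespace MasseyPaper

variable {V : Type} [DecidableEq V]

/-- The simplicial complex `K̄(n)` realized on the vertex set `[2n]` (0-indexed as
`Fin (2n)`): its minimal non-faces are the pairs `{k, n+k+i}`, `0 ≤ i ≤ n−1`,
`1 ≤ k ≤ n−i`, i.e. (0-indexed) the pairs `{x, y}` with `y ≥ n + x`; equivalently the
faces are the subsets `σ` with `y < n + x` for all `x, y ∈ σ`. -/
def barKnN (n : ℕ) : SComplex (Fin (2 * n)) where
  faces := {σ | ∀ x ∈ σ, ∀ y ∈ σ, (y : ℕ) < n + (x : ℕ)}
  empty_mem := by intro x hx; simp at hx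
  down_closed := by
    intro σ τ hσ hsub x hx y hy
    exact hσ x (hsub hx) y (hsub hy)
  singleton_mem := by
    intro v x hx y hy
    have hx' := Finset.mem_singleton.mp hx
    have hy' := Finset.mem_singleton.mp hy
    have h1 : (v : ℕ) < 2 * n := v.isLt
    rw [hx', hy']
    omega


/-- The standard basis vector `e_i ∈ ℝ^V`. -/
def stdPt (V : Type) [DecidableEq V] (i : V) : V → ℝ := fun j => if j = i then 1 else 0

/-- The geometric realization `|K| = ⋃_{∅ ≠ σ ∈ K} conv{e_i : i ∈ σ} ⊆ ℝ^V`. -/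
def geomReal {V : Type} [DecidableEq V] (K : SComplex V) : Set (V → ℝ) :=
  ⋃ σ ∈ {σ : Finset V | σ ∈ K.faces ∧ σ.Nonempty},
    convexHull ℝ {p : V → ℝ | ∃ i ∈ σ, p = stdPt V i}

section Statement8Aux

open Finset

/-- The barycentric coordinate of a point along the edge path. -/
noncomputable def phiF (n : ℕ) (x : Fin (2*n) → ℝ) : ℝ := ∑ j : Fin (2*n), ((j : ℕ) : ℝ) * x j

/-- The point on the edge path `e₀ – e₁ – ⋯ – e_{2n-1}` at parameter `s`. -/
noncomputable def pathPt (n : ℕ) (s : ℝ) : Fin (2*n) → ℝ :=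
  fun j => max 0 (1 - |s - ((j : ℕ) : ℝ)|)

/-- Characterization of membership in the geometric realization of `barKnN n`. -/
def Good (n : ℕ) (x : Fin (2*n) → ℝ) : Prop :=
  (∀ j, 0 ≤ x j) ∧ (∑ j, x j) = 1 ∧
    ∀ a b : Fin (2*n), x a ≠ 0 → x b ≠ 0 → (b : ℕ) < n + (a : ℕ)

lemma good_of_mem {n : ℕ} {x : Fin (2*n) → ℝ} (hx : x ∈ geomReal (barKnN n)) :
    Good n x := by
  simp only [geomReal, Set.mem_iUnion, Set.mem_setOf_eq] at hx
  obtain ⟨σ, ⟨hσf, _⟩, hxσ⟩ := hx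
  set C : Set (Fin (2*n) → ℝ) :=
    {q | (∀ j, 0 ≤ q j) ∧ (∑ j, q j) = 1 ∧ ∀ j, q j ≠ 0 → j ∈ σ} with hCdef
  have hC : Convex ℝ C := by
    rintro p hp q hq a b ha hb hab
    refine ⟨?_, ?_, ?_⟩
    · intro j
      have h1 := hp.1 j; have h2 := hq.1 j
      simpa using add_nonneg (mul_nonneg ha h1) (mul_nonneg hb h2)
    · have : ∑ j, (a * p j + b * q j) = 1 := by
        rw [Finset.sum_add_distrib, ← Finset.mul_sum, ← Finset.mul_sum, hp.2.1, hq.2.1]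
        simpa using hab
      simpa using this
    · intro j hj
      by_contra hjσ
      have hp0 : p j = 0 := by
        by_contra h; exact hjσ (hp.2.2 j h)
      have hq0 : q j = 0 := by
        by_contra h; exact hjσ (hq.2.2 j h)
      apply hj
      simp [hp0, hq0]
  have hsub : {p : Fin (2*n) → ℝ | ∃ i ∈ σ, p = stdPt (Fin (2*n)) i} ⊆ C := by
    rintro _ ⟨i, hi, rfl⟩
    refine ⟨?_, ?_, ?_⟩
    · intro j; unfold stdPt; split <;> norm_num
    · simp [stdPt, Finset.sum_ite_eq']
    · intro j h
      unfold stdPt at h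
      split at h
      · next hji => rw [hji]; exact hi
      · exact absurd rfl h
  have hxC : x ∈ C := convexHull_min hsub hC hxσ
  exact ⟨hxC.1, hxC.2.1, fun a b ha hb => hσf a (hxC.2.2 a ha) b (hxC.2.2 b hb)⟩

lemma mem_of_good {n : ℕ} {x : Fin (2*n) → ℝ} (hx : Good n x) :
    x ∈ geomReal (barKnN n) := by
  classical
  obtain ⟨h0, h1, h2⟩ := hx
  set σ : Finset (Fin (2*n)) := Finset.univ.filter (fun j => x j ≠ 0) with hσdef
  have hmem : ∀ j, j ∈ σ ↔ x j ≠ 0 := by intro j; simp [hσdef]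
  have hsum : ∑ j ∈ σ, x j = 1 := by
    rw [← h1]
    apply Finset.sum_subset (Finset.subset_univ _)
    intro j _ hj
    by_contra h
    exact hj ((hmem j).2 h)
  have hface : σ ∈ (barKnN n).faces :=
    fun a ha b hb => h2 a b ((hmem a).1 ha) ((hmem b).1 hb)
  have hne : σ.Nonempty := by
    by_contra h
    rw [Finset.not_nonempty_iff_eq_empty] at h
    rw [h] at hsum
    simp at hsum
  have hcm : σ.centerMass x (fun i => stdPt (Fin (2*n)) i) ∈
      convexHull ℝ {p : Fin (2*n) → ℝ | ∃ i ∈ σ, p = stdPt (Fin (2*n)) i} :=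
    Finset.centerMass_mem_convexHull σ (fun i _ => h0 i) (by rw [hsum]; norm_num)
      (fun i hi => ⟨i, hi, rfl⟩)
  have hxcm : σ.centerMass x (fun i => stdPt (Fin (2*n)) i) = x := by
    rw [Finset.centerMass, hsum, inv_one, one_smul]
    funext j
    rw [Finset.sum_apply]
    have : ∀ i ∈ σ, (x i • stdPt (Fin (2*n)) i) j = if j = i then x i else 0 := by
      intro i _
      simp only [Pi.smul_apply, stdPt, smul_eq_mul, mul_ite, mul_one, mul_zero]
    rw [Finset.sum_congr rfl this, Finset.sum_ite_eq]
    by_cases h : j ∈ σ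
    · simp [h]
    · have : x j = 0 := by
        by_contra hc; exact h ((hmem j).2 hc)
      simp [h, this]
  rw [geomReal]
  exact Set.mem_biUnion (show σ ∈ {σ : Finset (Fin (2*n)) | σ ∈ (barKnN n).faces ∧ σ.Nonempty}
    from ⟨hface, hne⟩) (hxcm ▸ hcm)

lemma phiF_bounds {n : ℕ} {x : Fin (2*n) → ℝ} (hx : Good n x) :
    0 ≤ phiF n x ∧ phiF n x ≤ 2*(n:ℝ) - 1 := by
  obtain ⟨h0, h1, -⟩ := hx
  constructor
  · exact Finset.sum_nonneg fun j _ => mul_nonneg (Nat.cast_nonneg _) (h0 j)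
  · have : phiF n x ≤ ∑ j : Fin (2*n), (2*(n:ℝ) - 1) * x j := by
      rw [phiF]
      apply Finset.sum_le_sum
      intro j _
      apply mul_le_mul_of_nonneg_right _ (h0 j)
      have hj1 : (j : ℕ) + 1 ≤ 2 * n := j.isLt
      have : ((j:ℕ):ℝ) + 1 ≤ 2*(n:ℝ) := by exact_mod_cast hj1
      linarith
    rw [← Finset.mul_sum, h1, mul_one] at this
    exact this

lemma exists_k {n : ℕ} (hn : 2 ≤ n) {s : ℝ} (hs0 : 0 ≤ s) (hs1 : s ≤ 2*(n:ℝ) - 1) :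
    ∃ k : ℕ, k + 2 ≤ 2*n ∧ (k:ℝ) ≤ s ∧ s ≤ (k:ℝ) + 1 := by
  refine ⟨min ⌊s⌋₊ (2*n - 2), by omega, ?_, ?_⟩
  · calc ((min ⌊s⌋₊ (2*n-2) : ℕ) : ℝ) ≤ (⌊s⌋₊ : ℝ) := by exact_mod_cast min_le_left _ _
      _ ≤ s := Nat.floor_le hs0
  · by_cases h : ⌊s⌋₊ ≤ 2*n - 2
    · rw [min_eq_left h]
      exact le_of_lt (Nat.lt_floor_add_one s)
    · rw [min_eq_right (le_of_not_ge h)]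
      have h2 : ((2*n - 2 : ℕ) : ℝ) = 2*(n:ℝ) - 2 := by
        rw [Nat.cast_sub (by omega)]
        push_cast; ring
      rw [h2]; linarith

lemma pathPt_supp {n : ℕ} {s : ℝ} {k : ℕ} (hks : (k:ℝ) ≤ s) (hsk : s ≤ (k:ℝ) + 1)
    {j : Fin (2*n)} (hj : pathPt n s j ≠ 0) : (j : ℕ) = k ∨ (j : ℕ) = k + 1 := by
  have habs : |s - ((j:ℕ):ℝ)| < 1 := by
    by_contra h
    push_neg at h
    apply hj
    unfold pathPt
    rw [max_eq_left (by linarith)]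
  rw [abs_lt] at habs
  have h1 : ((j:ℕ):ℝ) < (k:ℝ) + 2 := by linarith
  have h2 : (k:ℝ) < ((j:ℕ):ℝ) + 1 := by linarith
  have h1' : (j:ℕ) < k + 2 := by exact_mod_cast h1
  have h2' : k < (j:ℕ) + 1 := by exact_mod_cast h2
  omega

lemma pathPt_sum {n : ℕ} {s : ℝ} {k : ℕ} (hk2 : k + 2 ≤ 2*n) (hks : (k:ℝ) ≤ s)
    (hsk : s ≤ (k:ℝ) + 1) : ∑ j, pathPt n s j = 1 := by
  have hk : k < 2*n := by omega
  have hk1 : k + 1 < 2*n := by omega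
  set j0 : Fin (2*n) := ⟨k, hk⟩ with hj0
  set j1 : Fin (2*n) := ⟨k+1, hk1⟩ with hj1
  have hne : j0 ≠ j1 := by
    simp only [hj0, hj1, Fin.mk.injEq, ne_eq]
    omega
  have hv0 : pathPt n s j0 = 1 - (s - (k:ℝ)) := by
    unfold pathPt
    have hc : ((j0:ℕ):ℝ) = (k:ℝ) := by simp [hj0]
    rw [hc, abs_of_nonneg (by linarith), max_eq_right (by linarith)]
  have hv1 : pathPt n s j1 = s - (k:ℝ) := by
    unfold pathPt
    have hc : ((j1:ℕ):ℝ) = (k:ℝ) + 1 := by simp [hj1]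
    rw [hc, abs_of_nonpos (by linarith), max_eq_right (by linarith)]
    ring
  rw [← Finset.sum_subset (Finset.subset_univ ({j0, j1} : Finset (Fin (2*n))))]
  · rw [Finset.sum_pair hne, hv0, hv1]; ring
  · intro j _ hj
    by_contra hc
    rcases pathPt_supp hks hsk hc with h | h
    · exact hj (by simp [Finset.mem_insert]; left; exact Fin.ext h)
    · exact hj (by simp [Finset.mem_insert]; right; exact Fin.ext h)

lemma good_pathPt {n : ℕ} (hn : 2 ≤ n) {s : ℝ} (hs0 : 0 ≤ s) (hs1 : s ≤ 2*(n:ℝ) - 1) :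
    Good n (pathPt n s) := by
  obtain ⟨k, hk2, hks, hsk⟩ := exists_k hn hs0 hs1
  refine ⟨fun j => le_max_left _ _, pathPt_sum hk2 hks hsk, ?_⟩
  intro a b ha hb
  rcases pathPt_supp hks hsk ha with h | h <;>
    rcases pathPt_supp hks hsk hb with h' | h' <;> omega

lemma good_pairs_with_k {n : ℕ} (hn : 2 ≤ n) {x : Fin (2*n) → ℝ} (hx : Good n x)
    {k : ℕ} (hks : (k:ℝ) ≤ phiF n x) (hsk : phiF n x ≤ (k:ℝ) + 1) :
    (∀ y : Fin (2*n), x y ≠ 0 → k + 1 < n + (y:ℕ)) ∧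
    (∀ y : Fin (2*n), x y ≠ 0 → (y:ℕ) < n + k) := by
  classical
  obtain ⟨h0, h1, h2⟩ := hx
  set σ : Finset (Fin (2*n)) := Finset.univ.filter (fun j => x j ≠ 0) with hσdef
  have hmem : ∀ j, j ∈ σ ↔ x j ≠ 0 := by intro j; simp [hσdef]
  have hsum : ∑ j ∈ σ, x j = 1 := by
    rw [← h1]
    apply Finset.sum_subset (Finset.subset_univ _)
    intro j _ hj
    by_contra h
    exact hj ((hmem j).2 h)
  have hne : σ.Nonempty := by
    by_contra h
    rw [Finset.not_nonempty_iff_eq_empty] at h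
    rw [h] at hsum
    simp at hsum
  set m : Fin (2*n) := σ.min' hne with hmdef
  set M : Fin (2*n) := σ.max' hne with hMdef
  have hmσ : m ∈ σ := σ.min'_mem hne
  have hMσ : M ∈ σ := σ.max'_mem hne
  have hface : (M:ℕ) < n + (m:ℕ) := h2 m M ((hmem m).1 hmσ) ((hmem M).1 hMσ)
  -- φ is between m and M
  have hφM : phiF n x ≤ ((M:ℕ):ℝ) := by
    have : phiF n x ≤ ∑ j : Fin (2*n), ((M:ℕ):ℝ) * x j := by
      rw [phiF]
      apply Finset.sum_le_sum
      intro j _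
      by_cases hj : x j = 0
      · simp [hj]
      · apply mul_le_mul_of_nonneg_right _ (h0 j)
        have : j ≤ M := σ.le_max' j ((hmem j).2 hj)
        exact_mod_cast Fin.le_iff_val_le_val.1 this
    rwa [← Finset.mul_sum, h1, mul_one] at this
  have hmφ : ((m:ℕ):ℝ) ≤ phiF n x := by
    have : ∑ j : Fin (2*n), ((m:ℕ):ℝ) * x j ≤ phiF n x := by
      rw [phiF]
      apply Finset.sum_le_sum
      intro j _
      by_cases hj : x j = 0
      · simp [hj]
      · apply mul_le_mul_of_nonneg_right _ (h0 j)
        have : m ≤ j := σ.min'_le j ((hmem j).2 hj)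
        exact_mod_cast Fin.le_iff_val_le_val.1 this
    rwa [← Finset.mul_sum, h1, mul_one] at this
  -- point-mass lemmas
  have hmaxpm : phiF n x = ((M:ℕ):ℝ) → ∀ j, x j ≠ 0 → (j:ℕ) = (M:ℕ) := by
    intro hφ j hj
    have hzero : ∑ i : Fin (2*n), (((M:ℕ):ℝ) - ((i:ℕ):ℝ)) * x i = 0 := by
      have : ∑ i : Fin (2*n), (((M:ℕ):ℝ) - ((i:ℕ):ℝ)) * x i
          = ∑ i : Fin (2*n), ((M:ℕ):ℝ) * x i - phiF n x := by
        rw [phiF, ← Finset.sum_sub_distrib]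
        apply Finset.sum_congr rfl
        intro i _; ring
      rw [this, ← Finset.mul_sum, h1, mul_one, hφ]; ring
    have hnn : ∀ i ∈ (Finset.univ : Finset (Fin (2*n))), 0 ≤ (((M:ℕ):ℝ) - ((i:ℕ):ℝ)) * x i := by
      intro i _
      by_cases hi : x i = 0
      · simp [hi]
      · apply mul_nonneg _ (h0 i)
        have : i ≤ M := σ.le_max' i ((hmem i).2 hi)
        have : ((i:ℕ):ℝ) ≤ ((M:ℕ):ℝ) := by exact_mod_cast Fin.le_iff_val_le_val.1 this
        linarith
    have := (Finset.sum_eq_zero_iff_of_nonneg hnn).1 hzero j (Finset.mem_univ j)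
    rcases mul_eq_zero.1 this with h | h
    · have : ((j:ℕ):ℝ) = ((M:ℕ):ℝ) := by linarith
      exact_mod_cast this
    · exact absurd h hj
  have hminpm : phiF n x = ((m:ℕ):ℝ) → ∀ j, x j ≠ 0 → (j:ℕ) = (m:ℕ) := by
    intro hφ j hj
    have hzero : ∑ i : Fin (2*n), (((i:ℕ):ℝ) - ((m:ℕ):ℝ)) * x i = 0 := by
      have : ∑ i : Fin (2*n), (((i:ℕ):ℝ) - ((m:ℕ):ℝ)) * x i
          = phiF n x - ∑ i : Fin (2*n), ((m:ℕ):ℝ) * x i := by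
        rw [phiF, ← Finset.sum_sub_distrib]
        apply Finset.sum_congr rfl
        intro i _; ring
      rw [this, ← Finset.mul_sum, h1, mul_one, hφ]; ring
    have hnn : ∀ i ∈ (Finset.univ : Finset (Fin (2*n))), 0 ≤ (((i:ℕ):ℝ) - ((m:ℕ):ℝ)) * x i := by
      intro i _
      by_cases hi : x i = 0
      · simp [hi]
      · apply mul_nonneg _ (h0 i)
        have : m ≤ i := σ.min'_le i ((hmem i).2 hi)
        have : ((m:ℕ):ℝ) ≤ ((i:ℕ):ℝ) := by exact_mod_cast Fin.le_iff_val_le_val.1 this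
        linarith
    have := (Finset.sum_eq_zero_iff_of_nonneg hnn).1 hzero j (Finset.mem_univ j)
    rcases mul_eq_zero.1 this with h | h
    · have : ((j:ℕ):ℝ) = ((m:ℕ):ℝ) := by linarith
      exact_mod_cast this
    · exact absurd h hj
  have hkM : k ≤ (M:ℕ) := by
    have : (k:ℝ) ≤ ((M:ℕ):ℝ) := le_trans hks hφM
    exact_mod_cast this
  have hmk : (m:ℕ) ≤ k + 1 := by
    have : ((m:ℕ):ℝ) ≤ (k:ℝ) + 1 := le_trans hmφ hsk
    exact_mod_cast this
  constructor
  · intro y hy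
    have hmy : (m:ℕ) ≤ (y:ℕ) := Fin.le_iff_val_le_val.1 (σ.min'_le y ((hmem y).2 hy))
    by_contra hcon
    push_neg at hcon
    -- n + y ≤ k + 1, k ≤ M, M < n + m, m ≤ y forces equality chain
    have hMk : (M:ℕ) = k := by omega
    have hφeq : phiF n x = ((M:ℕ):ℝ) := by
      apply le_antisymm hφM
      rw [show ((M:ℕ):ℝ) = (k:ℝ) by exact_mod_cast hMk]
      exact hks
    have hym := hmaxpm hφeq m ((hmem m).1 hmσ)
    omega
  · intro y hy
    have hyM : (y:ℕ) ≤ (M:ℕ) := Fin.le_iff_val_le_val.1 (σ.le_max' y ((hmem y).2 hy))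
    rcases Nat.lt_or_ge (m:ℕ) (k+1) with h | h
    · omega
    · have hmk1 : (m:ℕ) = k + 1 := by omega
      have hφeq : phiF n x = ((m:ℕ):ℝ) := by
        apply le_antisymm
        · rw [show ((m:ℕ):ℝ) = (k:ℝ) + 1 by exact_mod_cast hmk1]
          exact hsk
        · exact hmφ
      have hyM' := hminpm hφeq M ((hmem M).1 hMσ)
      have hyy := hminpm hφeq y hy
      omega

lemma good_homotopy1 {n : ℕ} (hn : 2 ≤ n) {x : Fin (2*n) → ℝ} (hx : Good n x)
    {t : ℝ} (ht0 : 0 ≤ t) (ht1 : t ≤ 1) :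
    Good n ((1 - t) • x + t • pathPt n (phiF n x)) := by
  obtain ⟨hφ0, hφ1⟩ := phiF_bounds hx
  obtain ⟨k, hk2, hks, hsk⟩ := exists_k hn hφ0 hφ1
  obtain ⟨hA, hB⟩ := good_pairs_with_k hn hx hks hsk
  obtain ⟨h0, h1, h2⟩ := hx
  refine ⟨?_, ?_, ?_⟩
  · intro j
    simp only [Pi.add_apply, Pi.smul_apply, smul_eq_mul]
    exact add_nonneg (mul_nonneg (by linarith) (h0 j))
      (mul_nonneg ht0 (le_max_left _ _))
  · have hps := pathPt_sum hk2 hks hsk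
    simp only [Pi.add_apply, Pi.smul_apply, smul_eq_mul]
    rw [Finset.sum_add_distrib, ← Finset.mul_sum, ← Finset.mul_sum, h1, hps]
    ring
  · have hsupp : ∀ c : Fin (2*n), ((1 - t) • x + t • pathPt n (phiF n x)) c ≠ 0 →
        x c ≠ 0 ∨ ((c:ℕ) = k ∨ (c:ℕ) = k + 1) := by
      intro c hc
      by_cases h : x c = 0
      · right
        apply pathPt_supp hks hsk
        intro hp
        apply hc
        simp [h, hp]
      · left; exact h
    intro a b ha hb
    rcases hsupp a ha with h | h <;> rcases hsupp b hb with h' | h'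
    · exact h2 a b h h'
    · have := hA a h; omega
    · have := hB b h'; omega
    · omega

end Statement8Aux

/-- For `n ≥ 2`, the geometric realization of `K̄(n)` in `ℝ^{2n}`,
with the subspace topology, is contractible. -/
theorem statement8 (n : ℕ) (hn : 2 ≤ n) :
    ContractibleSpace (geomReal (barKnN n)) := by
  rw [contractible_iff_id_nullhomotopic]
  have hnR : (2:ℝ) ≤ (n:ℝ) := by exact_mod_cast hn
  have hn1 : (0:ℝ) ≤ 2*(n:ℝ) - 1 := by linarith
  have hx0mem : pathPt n 0 ∈ geomReal (barKnN n) :=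
    mem_of_good (good_pathPt hn le_rfl hn1)
  refine ⟨⟨pathPt n 0, hx0mem⟩, ?_⟩
  have hφcont : Continuous fun x : geomReal (barKnN n) => phiF n (x : Fin (2*n) → ℝ) := by
    unfold phiF
    exact continuous_finset_sum _ fun j _ =>
      continuous_const.mul ((continuous_apply j).comp continuous_subtype_val)
  have hpcont : Continuous fun s : ℝ => pathPt n s := by
    unfold pathPt
    exact continuous_pi fun j =>
      continuous_const.max (continuous_const.sub (continuous_id.sub continuous_const).abs)
  have hrmem : ∀ x : geomReal (barKnN n),
      pathPt n (phiF n (x : Fin (2*n) → ℝ)) ∈ geomReal (barKnN n) := fun x =>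
    mem_of_good (good_pathPt hn (phiF_bounds (good_of_mem x.2)).1
      (phiF_bounds (good_of_mem x.2)).2)
  set r : C(geomReal (barKnN n), geomReal (barKnN n)) :=
    ⟨fun x => ⟨pathPt n (phiF n (x : Fin (2*n) → ℝ)), hrmem x⟩,
      (hpcont.comp hφcont).subtype_mk _⟩ with hrdef
  have H1 : (ContinuousMap.id (geomReal (barKnN n))).Homotopy r := by
    refine ⟨⟨fun p => ⟨(1 - (p.1:ℝ)) • (p.2 : Fin (2*n) → ℝ) +
        (p.1:ℝ) • pathPt n (phiF n (p.2 : Fin (2*n) → ℝ)), ?_⟩, ?_⟩, ?_, ?_⟩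
    · exact mem_of_good (good_homotopy1 hn (good_of_mem p.2.2) p.1.2.1 p.1.2.2)
    · exact (((continuous_const.sub (continuous_subtype_val.comp continuous_fst)).smul
        (continuous_subtype_val.comp continuous_snd)).add
        ((continuous_subtype_val.comp continuous_fst).smul
          (hpcont.comp (hφcont.comp continuous_snd)))).subtype_mk _
    · intro x
      apply Subtype.ext
      simp
    · intro x
      apply Subtype.ext
      simp [hrdef]
  have H2 : r.Homotopy (ContinuousMap.const (geomReal (barKnN n)) ⟨pathPt n 0, hx0mem⟩) := by
    refine ⟨⟨fun p => ⟨pathPt n ((1 - (p.1:ℝ)) * phiF n (p.2 : Fin (2*n) → ℝ)), ?_⟩, ?_⟩,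
      ?_, ?_⟩
    · obtain ⟨hφ0, hφ1⟩ := phiF_bounds (good_of_mem p.2.2)
      have h1t : 0 ≤ 1 - (p.1:ℝ) := by linarith [p.1.2.2]
      have h1t' : 1 - (p.1:ℝ) ≤ 1 := by linarith [p.1.2.1]
      exact mem_of_good (good_pathPt hn (mul_nonneg h1t hφ0)
        (le_trans (mul_le_of_le_one_left hφ0 h1t') hφ1))
    · exact (hpcont.comp ((continuous_const.sub
        (continuous_subtype_val.comp continuous_fst)).mul
        (hφcont.comp continuous_snd))).subtype_mk _
    · intro x
      apply Subtype.ext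
      simp [hrdef]
    · intro x
      apply Subtype.ext
      simp
  exact ⟨H1.trans H2⟩

end MasseyPaper
end

section
/- Let n ≥ 2, s ≥ 1, and let K(n,s) = K(n)(s,…,s,1,…,1) be the simplicial multiwedge of K(n) on the vertex set {11,…,1s,…,n1,…,ns, n+1,…,2n}. Let 1 ≤ v ≤ w ≤ n with w − v ≤ n − 2. Then the induced subcomplex of K(n,s) on the vertex set {v1,…,vs, (v+1)1,…,(v+1)s, …, w1,…,ws} ∪ {n+v, n+v+1, …, n+w} is isomorphic, via the order-preserving relabeling of vertices (pq ↦ (p−v+1)q for v ≤ p ≤ w, 1 ≤ q ≤ s, and n+p ↦ (w−v+1)+(p−v+1) for v ≤ p ≤ w), to the simplicial complex \bar K(w−v+1, s) = \bar K(w−v+1)(s,…,s,1,…,1). -/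
namespace MasseyPaper

variable {V : Type} [DecidableEq V]

/-- The simplicial multiwedge (`J`-construction) `K(J)` of `K`, on the vertex set
`{(i, q) : i ∈ V, 1 ≤ q ≤ J i}`: the faces are the subsets containing no set
`I(J) = {(i, q) : i ∈ I, 1 ≤ q ≤ J i}` with `I` a minimal non-face of `K`. -/
def multiwedge (K : SComplex V) (J : V → ℕ) (hJ : ∀ i, 0 < J i) :
    SComplex (Σ i : V, Fin (J i)) where
  faces := {σ | ∀ I : Finset V, IsMNF K I → ¬ (I.sigma fun _ => Finset.univ) ⊆ σ}
  empty_mem := by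
    intro I hI hsub
    have hne : I.Nonempty := by
      rcases Finset.eq_empty_or_nonempty I with h | h
      · exact absurd (h ▸ K.empty_mem) hI.1
      · exact h
    rcases hne with ⟨i, hi⟩
    have hmem : (⟨i, ⟨0, hJ i⟩⟩ : Σ i : V, Fin (J i)) ∈ I.sigma fun _ => Finset.univ :=
      Finset.mem_sigma.mpr ⟨hi, Finset.mem_univ _⟩
    simpa using hsub hmem
  down_closed := by
    intro σ τ hσ hsub I hI hcon
    exact hσ I hI (hcon.trans hsub)
  singleton_mem := by
    intro w I hI hsub
    have hne : I.Nonempty := by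
      rcases Finset.eq_empty_or_nonempty I with h | h
      · exact absurd (h ▸ K.empty_mem) hI.1
      · exact h
    rcases hne with ⟨i, hi⟩
    obtain ⟨j, hj, hij⟩ : ∃ j ∈ I, j ≠ i := by
      by_contra hcontra
      push_neg at hcontra
      have : I = {i} := Finset.eq_singleton_iff_unique_mem.mpr ⟨hi, fun j hj => hcontra j hj⟩
      exact hI.1 (this ▸ K.singleton_mem i)
    have h1 : (⟨i, ⟨0, hJ i⟩⟩ : Σ i : V, Fin (J i)) ∈ I.sigma fun _ => Finset.univ :=
      Finset.mem_sigma.mpr ⟨hi, Finset.mem_univ _⟩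
    have h2 : (⟨j, ⟨0, hJ j⟩⟩ : Σ i : V, Fin (J i)) ∈ I.sigma fun _ => Finset.univ :=
      Finset.mem_sigma.mpr ⟨hj, Finset.mem_univ _⟩
    have e1 := Finset.mem_singleton.mp (hsub h1)
    have e2 := Finset.mem_singleton.mp (hsub h2)
    exact hij (congrArg Sigma.fst (e2.trans e1.symm))


/-- The simplicial complex `K(n)` on the vertex set `[2n]` (first summand: vertices
`1, …, n`; second summand: vertices `n+1, …, 2n`, all 0-indexed), whose minimal
non-faces are exactly the pairs `{k, n+k+i}`, `0 ≤ i ≤ n−2`, `1 ≤ k ≤ n−i`;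
equivalently the pairs `{Sum.inl a, Sum.inr c}` with `a ≤ c` and `(a, c) ≠ (0, n−1)`. -/
def Kn (n : ℕ) : SComplex (Fin n ⊕ Fin n) where
  faces := {σ | ∀ a c : Fin n, (a : ℕ) ≤ (c : ℕ) → ¬((a : ℕ) = 0 ∧ (c : ℕ) = n - 1) →
      ¬ ({Sum.inl a, Sum.inr c} : Finset (Fin n ⊕ Fin n)) ⊆ σ}
  empty_mem := by
    intro a c _ _ hsub
    simpa using hsub (Finset.mem_insert_self _ _)
  down_closed := by
    intro σ τ hσ hsub a c h1 h2 hcon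
    exact hσ a c h1 h2 (hcon.trans hsub)
  singleton_mem := by
    intro v a c _ _ hsub
    have h1 : Sum.inl a = v := Finset.mem_singleton.mp (hsub (by simp))
    have h2 : Sum.inr c = v := Finset.mem_singleton.mp (hsub (by simp))
    rw [← h2] at h1
    cases h1

/-- The simplicial complex `K̄(n)` on the vertex set `[2n]`, whose minimal non-faces are
exactly the pairs `{k, n+k+i}`, `0 ≤ i ≤ n−1`, `1 ≤ k ≤ n−i`; equivalently the pairs
`{Sum.inl a, Sum.inr c}` with `a ≤ c`. -/
def barKn (n : ℕ) : SComplex (Fin n ⊕ Fin n) where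
  faces := {σ | ∀ a c : Fin n, (a : ℕ) ≤ (c : ℕ) →
      ¬ ({Sum.inl a, Sum.inr c} : Finset (Fin n ⊕ Fin n)) ⊆ σ}
  empty_mem := by
    intro a c _ hsub
    simpa using hsub (Finset.mem_insert_self _ _)
  down_closed := by
    intro σ τ hσ hsub a c h1 hcon
    exact hσ a c h1 (hcon.trans hsub)
  singleton_mem := by
    intro v a c _ hsub
    have h1 : Sum.inl a = v := Finset.mem_singleton.mp (hsub (by simp))
    have h2 : Sum.inr c = v := Finset.mem_singleton.mp (hsub (by simp))
    rw [← h2] at h1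
    cases h1

/-- The multiwedge tuple `J = (s, …, s, 1, …, 1)`. -/
abbrev KnsJ (n s : ℕ) : Fin n ⊕ Fin n → ℕ := Sum.elim (fun _ => s) (fun _ => 1)

/-- `K(n, s) = K(n)(s, …, s, 1, …, 1)`. -/
def Kns (n s : ℕ) (hs : 0 < s) : SComplex (Σ i : Fin n ⊕ Fin n, Fin (KnsJ n s i)) :=
  multiwedge (Kn n) (KnsJ n s) (by intro i; rcases i with a | c; exacts [hs, Nat.one_pos])

/-- `K̄(n, s) = K̄(n)(s, …, s, 1, …, 1)`. -/
def barKns (n s : ℕ) (hs : 0 < s) : SComplex (Σ i : Fin n ⊕ Fin n, Fin (KnsJ n s i)) :=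
  multiwedge (barKn n) (KnsJ n s) (by intro i; rcases i with a | c; exacts [hs, Nat.one_pos])


/-- The order-preserving relabeling of the vertices of `K̄(w−v+1, s)` into the vertex set
of `K(n, s)`: the wedged vertex `(p, q)` is sent to `(p + v − 1, q)` and the unwedged
vertex `c` to `c + v − 1` (all 0-indexed). -/
def relabel (n s v w : ℕ) (hv : 1 ≤ v) (hvw : v ≤ w) (hw : w ≤ n) :
    (Σ i : Fin (w - v + 1) ⊕ Fin (w - v + 1), Fin (KnsJ (w - v + 1) s i)) →
      (Σ i : Fin n ⊕ Fin n, Fin (KnsJ n s i))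
  | ⟨Sum.inl p, q⟩ => ⟨Sum.inl ⟨p.1 + (v - 1), by have := p.2; omega⟩, q⟩
  | ⟨Sum.inr c, q⟩ => ⟨Sum.inr ⟨c.1 + (v - 1), by have := c.2; omega⟩, q⟩


lemma small_face (K : SComplex V) {J : Finset V} (h : J.card ≤ 1) : J ∈ K.faces := by
  rcases J.eq_empty_or_nonempty with rfl | ⟨x, hx⟩
  · exact K.empty_mem
  · have : J = {x} := Finset.eq_singleton_iff_unique_mem.mpr ⟨hx, fun y hy => by
      by_contra hne
      have : 2 ≤ J.card := Finset.one_lt_card.mpr ⟨y, hy, x, hx, hne⟩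
      omega⟩
    exact this ▸ K.singleton_mem x

lemma mnf_pair_s19 (K : SComplex V) (x y : V) (hxy : x ≠ y)
    (hnf : ({x, y} : Finset V) ∉ K.faces) : IsMNF K {x, y} := by
  refine ⟨hnf, fun J hJ => small_face K ?_⟩
  have hc : ({x, y} : Finset V).card = 2 := Finset.card_pair hxy
  have := Finset.card_lt_card hJ
  omega

lemma pair_not_face_Kn (n : ℕ) (a c : Fin n) (h1 : (a : ℕ) ≤ (c : ℕ))
    (h2 : ¬((a : ℕ) = 0 ∧ (c : ℕ) = n - 1)) :
    ({Sum.inl a, Sum.inr c} : Finset (Fin n ⊕ Fin n)) ∉ (Kn n).faces :=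
  fun h => h a c h1 h2 (le_refl _)

lemma mnf_Kn (n : ℕ) (a c : Fin n) (h1 : (a : ℕ) ≤ (c : ℕ))
    (h2 : ¬((a : ℕ) = 0 ∧ (c : ℕ) = n - 1)) :
    IsMNF (Kn n) {Sum.inl a, Sum.inr c} :=
  mnf_pair_s19 _ _ _ (by simp) (pair_not_face_Kn n a c h1 h2)

lemma pair_not_face_barKn (n : ℕ) (a c : Fin n) (h1 : (a : ℕ) ≤ (c : ℕ)) :
    ({Sum.inl a, Sum.inr c} : Finset (Fin n ⊕ Fin n)) ∉ (barKn n).faces :=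
  fun h => h a c h1 (le_refl _)

lemma mnf_Kn_iff (n : ℕ) (I : Finset (Fin n ⊕ Fin n)) :
    IsMNF (Kn n) I ↔ ∃ a c : Fin n, (a : ℕ) ≤ (c : ℕ) ∧
      ¬((a : ℕ) = 0 ∧ (c : ℕ) = n - 1) ∧ I = {Sum.inl a, Sum.inr c} := by
  constructor
  · rintro ⟨hnf, hmin⟩
    have : ¬ ∀ a c : Fin n, (a : ℕ) ≤ (c : ℕ) → ¬((a : ℕ) = 0 ∧ (c : ℕ) = n - 1) →
        ¬ ({Sum.inl a, Sum.inr c} : Finset (Fin n ⊕ Fin n)) ⊆ I := hnf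
    push_neg at this
    obtain ⟨a, c, h1, h2', hsub⟩ := this
    have h2 : ¬((a : ℕ) = 0 ∧ (c : ℕ) = n - 1) := fun h => h2' h.1 h.2
    refine ⟨a, c, h1, h2, ?_⟩
    by_contra hne
    exact pair_not_face_Kn n a c h1 h2 (hmin _ ⟨hsub, fun h => hne ((Finset.Subset.antisymm hsub h).symm)⟩)
  · rintro ⟨a, c, h1, h2, rfl⟩
    exact mnf_Kn n a c h1 h2

lemma mnf_barKn_iff (n : ℕ) (I : Finset (Fin n ⊕ Fin n)) :
    IsMNF (barKn n) I ↔ ∃ a c : Fin n, (a : ℕ) ≤ (c : ℕ) ∧ I = {Sum.inl a, Sum.inr c} := by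
  constructor
  · rintro ⟨hnf, hmin⟩
    have : ¬ ∀ a c : Fin n, (a : ℕ) ≤ (c : ℕ) →
        ¬ ({Sum.inl a, Sum.inr c} : Finset (Fin n ⊕ Fin n)) ⊆ I := hnf
    push_neg at this
    obtain ⟨a, c, h1, hsub⟩ := this
    refine ⟨a, c, h1, ?_⟩
    by_contra hne
    exact pair_not_face_barKn n a c h1 (hmin _ ⟨hsub, fun h => hne ((Finset.Subset.antisymm hsub h).symm)⟩)
  · rintro ⟨a, c, h1, rfl⟩
    exact mnf_pair_s19 _ _ _ (by simp) (pair_not_face_barKn n a c h1)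


lemma sig_inl_congr {n s : ℕ} {x y : Fin n} (h : x = y) (q : Fin s) :
    (⟨Sum.inl x, q⟩ : Σ k : Fin n ⊕ Fin n, Fin (KnsJ n s k)) = ⟨Sum.inl y, q⟩ := by
  subst h; rfl

lemma sig_inr_congr {n s : ℕ} {x y : Fin n} (h : x = y) (q : Fin 1) :
    (⟨Sum.inr x, q⟩ : Σ k : Fin n ⊕ Fin n, Fin (KnsJ n s k)) = ⟨Sum.inr y, q⟩ := by
  subst h; rfl

lemma sig_inl_inj {n s : ℕ} {x y : Fin n} {q q' : Fin s}
    (h : (⟨Sum.inl x, q⟩ : Σ k : Fin n ⊕ Fin n, Fin (KnsJ n s k)) = ⟨Sum.inl y, q'⟩) :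
    x = y ∧ q = q' := by
  obtain rfl : x = y := Sum.inl.inj (congrArg Sigma.fst h)
  refine ⟨rfl, ?_⟩; injection h with h1 h2

lemma sig_inr_inj {n s : ℕ} {x y : Fin n} {q q' : Fin 1}
    (h : (⟨Sum.inr x, q⟩ : Σ k : Fin n ⊕ Fin n, Fin (KnsJ n s k)) = ⟨Sum.inr y, q'⟩) :
    x = y ∧ q = q' := by
  obtain rfl : x = y := Sum.inr.inj (congrArg Sigma.fst h)
  refine ⟨rfl, ?_⟩; injection h with h1 h2

/-- For `n ≥ 2`, `s ≥ 1` and `1 ≤ v ≤ w ≤ n` with `w − v ≤ n − 2`, the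
induced subcomplex of `K(n, s)` on the vertex set
`{v1, …, vs, …, w1, …, ws} ∪ {n+v, …, n+w}` is isomorphic, via the order-preserving
relabeling `relabel`, to `K̄(w−v+1, s) = K̄(w−v+1)(s, …, s, 1, …, 1)`: the relabeling is
injective, its image is exactly that vertex set, and it carries faces to faces in both
directions. -/
theorem statement19 (n s v w : ℕ) (hn : 2 ≤ n) (hs : 0 < s)
    (hv : 1 ≤ v) (hvw : v ≤ w) (hwn : w ≤ n) (hgap : w - v ≤ n - 2) :
    Function.Injective (relabel n s v w hv hvw hwn) ∧
    Finset.univ.image (relabel n s v w hv hvw hwn) =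
      Finset.univ.filter (fun x : Σ i : Fin n ⊕ Fin n, Fin (KnsJ n s i) =>
        v ≤ Sum.elim (fun a : Fin n => (a : ℕ)) (fun c : Fin n => (c : ℕ)) x.1 + 1 ∧
        Sum.elim (fun a : Fin n => (a : ℕ)) (fun c : Fin n => (c : ℕ)) x.1 + 1 ≤ w) ∧
    (∀ σ : Finset (Σ i : Fin (w - v + 1) ⊕ Fin (w - v + 1), Fin (KnsJ (w - v + 1) s i)),
      σ ∈ (barKns (w - v + 1) s hs).faces ↔
      σ.image (relabel n s v w hv hvw hwn) ∈ (Kns n s hs).faces) := by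
  have hinj : Function.Injective (relabel n s v w hv hvw hwn) := by
    rintro ⟨p | p, q⟩ ⟨p' | p', q'⟩ h
    · obtain ⟨h1, h2⟩ := sig_inl_inj (n := n) (s := s) h
      obtain rfl : p = p' := Fin.ext (by have := congrArg Fin.val h1; simp at this; omega)
      obtain rfl : q = q' := h2
      rfl
    · exact absurd (congrArg Sigma.fst h) (by simp [relabel])
    · exact absurd (congrArg Sigma.fst h) (by simp [relabel])
    · obtain ⟨h1, h2⟩ := sig_inr_inj (n := n) (s := s) h
      obtain rfl : p = p' := Fin.ext (by have := congrArg Fin.val h1; simp at this; omega)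
      obtain rfl : q = q' := h2
      rfl
  refine ⟨hinj, ?_, ?_⟩
  · ext x
    rcases x with ⟨a | a, q⟩ <;>
      simp only [Finset.mem_image, Finset.mem_filter, Finset.mem_univ, true_and,
        Sum.elim_inl, Sum.elim_inr]
    · constructor
      · rintro ⟨⟨p | p, qy⟩, hy⟩
        · obtain ⟨h3, -⟩ := sig_inl_inj (n := n) (s := s) hy
          have := congrArg Fin.val h3; simp at this
          have := p.2; omega
        · exact absurd (congrArg Sigma.fst hy) (by simp [relabel])
      · rintro ⟨h1, h2⟩
        exact ⟨⟨Sum.inl ⟨a.1 - (v - 1), by omega⟩, q⟩,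
          sig_inl_congr (Fin.ext (by simp; omega)) q⟩
    · constructor
      · rintro ⟨⟨p | p, qy⟩, hy⟩
        · exact absurd (congrArg Sigma.fst hy) (by simp [relabel])
        · obtain ⟨h3, -⟩ := sig_inr_inj (n := n) (s := s) hy
          have := congrArg Fin.val h3; simp at this
          have := p.2; omega
      · rintro ⟨h1, h2⟩
        exact ⟨⟨Sum.inr ⟨a.1 - (v - 1), by omega⟩, q⟩,
          sig_inr_congr (Fin.ext (by simp; omega)) q⟩
  · intro σ
    constructor
    · intro hσ I' hI' hsub
      obtain ⟨a', c', h1, h2, rfl⟩ := (mnf_Kn_iff n I').mp hI'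
      have hamem : (⟨Sum.inl a', ⟨0, hs⟩⟩ : Σ k : Fin n ⊕ Fin n, Fin (KnsJ n s k)) ∈
          σ.image (relabel n s v w hv hvw hwn) :=
        hsub (Finset.mem_sigma.mpr ⟨by simp, Finset.mem_univ _⟩)
      have hcmem : (⟨Sum.inr c', ⟨0, Nat.one_pos⟩⟩ : Σ k : Fin n ⊕ Fin n, Fin (KnsJ n s k)) ∈
          σ.image (relabel n s v w hv hvw hwn) :=
        hsub (Finset.mem_sigma.mpr ⟨by simp, Finset.mem_univ _⟩)
      obtain ⟨ya, -, hya⟩ := Finset.mem_image.mp hamem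
      obtain ⟨yc, -, hyc⟩ := Finset.mem_image.mp hcmem
      have hab : v - 1 ≤ a'.1 ∧ a'.1 + 1 ≤ w := by
        rcases ya with ⟨p | p, qy⟩
        · obtain ⟨h3, -⟩ := sig_inl_inj (n := n) (s := s) hya
          have := congrArg Fin.val h3; simp at this
          have := p.2; omega
        · exact absurd (congrArg Sigma.fst hya) (by simp [relabel])
      have hcb : v - 1 ≤ c'.1 ∧ c'.1 + 1 ≤ w := by
        rcases yc with ⟨p | p, qy⟩
        · exact absurd (congrArg Sigma.fst hyc) (by simp [relabel])
        · obtain ⟨h3, -⟩ := sig_inr_inj (n := n) (s := s) hyc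
          have := congrArg Fin.val h3; simp at this
          have := p.2; omega
      set A : Fin (w - v + 1) := ⟨a'.1 - (v - 1), by omega⟩ with hA
      set C : Fin (w - v + 1) := ⟨c'.1 - (v - 1), by omega⟩ with hC
      refine hσ {Sum.inl A, Sum.inr C}
        (mnf_pair_s19 _ _ _ (by simp) (pair_not_face_barKn _ A C (by simp [hA, hC]; omega))) ?_
      intro z hz
      obtain ⟨hz1, -⟩ := Finset.mem_sigma.mp hz
      rcases z with ⟨i, qz⟩
      rcases Finset.mem_insert.mp hz1 with rfl | hz2
      · have hrel : relabel n s v w hv hvw hwn ⟨Sum.inl A, qz⟩ =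
            (⟨Sum.inl a', qz⟩ : Σ k : Fin n ⊕ Fin n, Fin (KnsJ n s k)) :=
          sig_inl_congr (Fin.ext (by simp [hA]; omega)) qz
        have hmem : (⟨Sum.inl a', qz⟩ : Σ k : Fin n ⊕ Fin n, Fin (KnsJ n s k)) ∈
            σ.image (relabel n s v w hv hvw hwn) :=
          hsub (Finset.mem_sigma.mpr ⟨by simp, Finset.mem_univ _⟩)
        obtain ⟨y, hyσ, hy⟩ := Finset.mem_image.mp hmem
        rwa [hinj (hy.trans hrel.symm)] at hyσ
      · obtain rfl : i = Sum.inr C := Finset.mem_singleton.mp hz2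
        have hrel : relabel n s v w hv hvw hwn ⟨Sum.inr C, qz⟩ =
            (⟨Sum.inr c', qz⟩ : Σ k : Fin n ⊕ Fin n, Fin (KnsJ n s k)) :=
          sig_inr_congr (Fin.ext (by simp [hC]; omega)) qz
        have hmem : (⟨Sum.inr c', qz⟩ : Σ k : Fin n ⊕ Fin n, Fin (KnsJ n s k)) ∈
            σ.image (relabel n s v w hv hvw hwn) :=
          hsub (Finset.mem_sigma.mpr ⟨by simp, Finset.mem_univ _⟩)
        obtain ⟨y, hyσ, hy⟩ := Finset.mem_image.mp hmem
        rwa [hinj (hy.trans hrel.symm)] at hyσ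
    · intro hK I hI hsub
      obtain ⟨a, c, h1, rfl⟩ := (mnf_barKn_iff _ I).mp hI
      set a' : Fin n := ⟨a.1 + (v - 1), by have := a.2; omega⟩ with ha'
      set c' : Fin n := ⟨c.1 + (v - 1), by have := c.2; omega⟩ with hc'
      have hc2 := c.2
      refine hK {Sum.inl a', Sum.inr c'}
        (mnf_Kn n a' c' (by simp [ha', hc']; omega)
          (by rintro ⟨ha0, hc1⟩; simp [ha', hc'] at ha0 hc1; omega)) ?_
      intro z hz
      obtain ⟨hz1, -⟩ := Finset.mem_sigma.mp hz
      rcases z with ⟨i, qz⟩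
      rcases Finset.mem_insert.mp hz1 with rfl | hz2
      · refine Finset.mem_image.mpr ⟨⟨Sum.inl a, qz⟩,
          hsub (Finset.mem_sigma.mpr ⟨by simp, Finset.mem_univ _⟩), ?_⟩
        exact sig_inl_congr (Fin.ext (by simp [ha'])) qz
      · obtain rfl : i = Sum.inr c' := Finset.mem_singleton.mp hz2
        refine Finset.mem_image.mpr ⟨⟨Sum.inr c, qz⟩,
          hsub (Finset.mem_sigma.mpr ⟨by simp, Finset.mem_univ _⟩), ?_⟩
        exact sig_inr_congr (Fin.ext (by simp [hc'])) qz


end MasseyPaper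
end
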